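/- arXiv:1210.3146 — 8 statements merged into one kernel-verified Lean document; each statement's English description precedes it below -/
import Mathlib

section
/- Let w be a privileged word and let u be a privileged prefix of w. Then u is also a suffix of w. Symmetrically, every privileged suffix of a privileged word w is also a prefix of w. -/
/-- Number of occurrences of `u` as a factor of `w` (positions are 0-indexed). -/
noncomputable def occCount {A : Type*} (u w : List A) : ℕ :=
  Set.ncard {i : ℕ | i + u.length ≤ w.length ∧ (w.drop i).take u.length = u}

/-- `v` is a complete first return to `u`: `u` is a prefix and a suffix of `v`,
and `u` has exactly two occurrences in `v`. -/
def IsCompleteFirstReturn {A : Type*} (v u : List A) : Prop :=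
  u <+: v ∧ u <:+ v ∧ occCount u v = 2

/-- Privileged words: the empty word and the single letters are privileged, and a word of
length at least 2 is privileged if it is a complete first return to a shorter privileged word. -/
inductive Privileged {A : Type*} : List A → Prop where
  | nil : Privileged ([] : List A)
  | single (a : A) : Privileged [a]
  | ret (w u : List A) : 2 ≤ w.length → u.length < w.length → Privileged u →
      IsCompleteFirstReturn w u → Privileged w

/-- A complete return word: a complete first return to some word
(the empty word counted by convention; letters are complete first returns to the empty word). -/
def IsCompleteReturnWord {A : Type*} (v : List A) : Prop :=
  v = [] ∨ ∃ u : List A, IsCompleteFirstReturn v u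

/-- Position `i` of `w` (1-based, `1 ≤ i ≤ |w|`) introduces the factor `u`:
`u` occurs in `w` ending at position `i` and `u` occurs exactly once in the prefix `w[1,i]`. -/
def Introduces {A : Type*} (w : List A) (i : ℕ) (u : List A) : Prop :=
  1 ≤ i ∧ i ≤ w.length ∧ u <:+ w.take i ∧ occCount u (w.take i) = 1

/-- A finite word is rich if it has exactly `|w| + 1` distinct palindromic factors. -/
noncomputable def RichWord {A : Type*} (w : List A) : Prop :=
  Set.ncard {u : List A | u <:+: w ∧ u.reverse = u} = w.length + 1

/-- `u` is a (finite) factor of the infinite word `w`. -/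
def IsFactorInf {A : Type*} (w : ℕ → A) (u : List A) : Prop :=
  ∃ i : ℕ, u = (List.range u.length).map fun k => w (i + k)

/-- A Q-property of finite words. -/
structure IsQProperty {A : Type*} (Q : List A → Prop) : Prop where
  q_nil : Q []
  q_single : ∀ a : A, Q [a]
  ends_at_every_position : ∀ (w : List A) (i : ℕ), 1 ≤ i → i ≤ w.length →
    ∃ u : List A, u ≠ [] ∧ u <:+ w.take i ∧ Q u
  introduces_at_most_one : ∀ (w : List A) (i : ℕ) (u v : List A),
    Introduces w i u → Introduces w i v → Q u → Q v → u = v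

/-- Q-complexity of an infinite word: the number of distinct factors of length `n`
having property `Q`. -/
noncomputable def qComplexityInf {A : Type*} (w : ℕ → A) (Q : List A → Prop) (n : ℕ) : ℕ :=
  Set.ncard {u : List A | IsFactorInf w u ∧ Q u ∧ u.length = n}

/-- Privileged complexity of an infinite word. -/
noncomputable def privComplexityInf {A : Type*} (w : ℕ → A) (n : ℕ) : ℕ :=
  Set.ncard {u : List A | IsFactorInf w u ∧ Privileged u ∧ u.length = n}

/-- Palindromic complexity of an infinite word. -/
noncomputable def palComplexityInf {A : Type*} (w : ℕ → A) (n : ℕ) : ℕ :=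
  Set.ncard {u : List A | IsFactorInf w u ∧ u.reverse = u ∧ u.length = n}

/-- An infinite word is ultimately periodic if it is of the form `u v v v ⋯`
with `v` nonempty. -/
def UltimatelyPeriodic {A : Type*} (w : ℕ → A) : Prop :=
  ∃ u v : List A, v ≠ [] ∧ ∀ n : ℕ, w n =
    if n < u.length then u.getD n (w 0)
    else v.getD ((n - u.length) % v.length) (w 0)

/-- An infinite word is Sturmian if it has exactly `n + 1` distinct factors of
length `n` for every `n`. -/
def Sturmian {A : Type*} (w : ℕ → A) : Prop :=
  ∀ n : ℕ, Set.ncard {u : List A | IsFactorInf w u ∧ u.length = n} = n + 1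

/-- A finite binary word is balanced: its set of factors is balanced. -/
def BalancedWord (x : List Bool) : Prop :=
  ∀ u v : List Bool, u <:+: x → v <:+: x → u.length = v.length →
    ((u.count true : ℤ) - (v.count true : ℤ)).natAbs ≤ 1

/-- `u` is a right special factor of the infinite word `w`. -/
def RightSpecial {A : Type*} (w : ℕ → A) (u : List A) : Prop :=
  ∃ a b : A, a ≠ b ∧ IsFactorInf w (u ++ [a]) ∧ IsFactorInf w (u ++ [b])

/-- The Thue-Morse word: the `n`-th letter is the parity of the number of ones in the
binary expansion of `n` (`false` = 0, `true` = 1). -/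
def thueMorse (n : ℕ) : Bool := (Nat.digits 2 n).count 1 % 2 == 1


private lemma occ_set_eq_aux {A : Type*} {w u' : List A}
    (hlt : u'.length < w.length)
    (hpre : u' <+: w) (hsuf : u' <:+ w)
    (hocc : occCount u' w = 2) :
    {i : ℕ | i + u'.length ≤ w.length ∧ (w.drop i).take u'.length = u'} =
      {0, w.length - u'.length} := by
  unfold occCount at hocc
  set S : Set ℕ := {i : ℕ | i + u'.length ≤ w.length ∧ (w.drop i).take u'.length = u'} with hSdef
  have h0 : (0 : ℕ) ∈ S := by
    refine ⟨by omega, ?_⟩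
    simpa using (List.prefix_iff_eq_take.mp hpre).symm
  have hm : (w.length - u'.length) ∈ S := by
    refine ⟨by omega, ?_⟩
    rw [← List.suffix_iff_eq_drop.mp hsuf]
    simp
  have hfin : S.Finite := by
    apply (Set.finite_Iic w.length).subset
    intro i hi
    have := hi.1
    exact Set.mem_Iic.mpr (by omega)
  have hsub : ({0, w.length - u'.length} : Set ℕ) ⊆ S := by
    intro i hi
    simp only [Set.mem_insert_iff, Set.mem_singleton_iff] at hi
    rcases hi with h | h <;> subst h
    · exact h0
    · exact hm
  have hne : (0 : ℕ) ≠ w.length - u'.length := by omega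
  have := Set.eq_of_subset_of_ncard_le hsub
    (by rw [hocc, Set.ncard_pair hne]) hfin
  exact this.symm

private lemma priv_key {A : Type*} :
    ∀ n (w : List A), w.length ≤ n → Privileged w → ∀ u : List A, Privileged u →
      (u <+: w → u <:+ w) ∧ (u <:+ w → u <+: w) := by
  intro n
  induction n with
  | zero =>
    intro w hwn _ u _
    have hw0 : w = [] := List.length_eq_zero_iff.mp (Nat.le_zero.mp hwn)
    subst hw0
    constructor <;> intro h
    · rw [List.prefix_nil.mp h]
    · rw [List.suffix_nil.mp h]
  | succ n ih =>
    intro w hwn hw u hu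
    rcases hw with _ | a | ⟨w, u', h2, hlt, hu', hret⟩
    · -- w = []
      constructor <;> intro h
      · rw [List.prefix_nil.mp h]
      · rw [List.suffix_nil.mp h]
    · -- w = [a]
      constructor <;> intro h
      · rcases Nat.le_one_iff_eq_zero_or_eq_one.mp (by simpa using h.length_le) with h0 | h1
        · rw [List.length_eq_zero_iff.mp h0]; exact List.nil_suffix
        · rw [h.eq_of_length (by simpa using h1)]
      · rcases Nat.le_one_iff_eq_zero_or_eq_one.mp (by simpa using h.length_le) with h0 | h1
        · rw [List.length_eq_zero_iff.mp h0]; exact List.nil_prefix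
        · rw [h.eq_of_length (by simpa using h1)]
    · -- ret case
      obtain ⟨hpre, hsuf, hocc⟩ := hret
      have hS := occ_set_eq_aux hlt hpre hsuf hocc
      have hu'w : u'.length < w.length := hlt
      constructor
      · intro hpw
        rcases lt_or_eq_of_le hpw.length_le with hlen | hlen
        · by_cases hle : u.length ≤ u'.length
          · exact (((ih u' (by omega) hu' u hu).1
              (List.prefix_of_prefix_length_le hpw hpre hle))).trans hsuf
          · have hlt2 : u'.length < u.length := by omega
            have hu'u : u' <+: u :=
              List.prefix_of_prefix_length_le hpre hpw (by omega)
            have hsu : u' <:+ u := (ih u (by omega) hu u' hu').1 hu'u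
            have hj : (u.length - u'.length) ∈
                {i : ℕ | i + u'.length ≤ w.length ∧ (w.drop i).take u'.length = u'} := by
              refine ⟨by omega, ?_⟩
              rw [List.take_drop]
              have he : u.length - u'.length + u'.length = u.length := by omega
              rw [he, ← List.prefix_iff_eq_take.mp hpw]
              have := List.suffix_iff_eq_drop.mp hsu
              rw [← this]
            rw [hS] at hj
            exfalso
            simp only [Set.mem_insert_iff, Set.mem_singleton_iff] at hj
            rcases hj with h | h <;> omega
        · rw [hpw.eq_of_length hlen]
      · intro hsw
        rcases lt_or_eq_of_le hsw.length_le with hlen | hlen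
        · by_cases hle : u.length ≤ u'.length
          · have hrp : u.reverse <+: u'.reverse :=
              List.prefix_of_prefix_length_le hsw.reverse hsuf.reverse (by simpa using hle)
            have hsu' : u <:+ u' := by
              have := hrp
              rwa [List.reverse_prefix] at this
            exact ((ih u' (by omega) hu' u hu).2 hsu').trans hpre
          · have hlt2 : u'.length < u.length := by omega
            have hsu : u' <:+ u := by
              have hrp : u'.reverse <+: u.reverse :=
                List.prefix_of_prefix_length_le hsuf.reverse hsw.reverse (by simp; omega)
              rwa [List.reverse_prefix] at hrp
            have hpu : u' <+: u := (ih u (by omega) hu u' hu').2 hsu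
            have hj : (w.length - u.length) ∈
                {i : ℕ | i + u'.length ≤ w.length ∧ (w.drop i).take u'.length = u'} := by
              refine ⟨by omega, ?_⟩
              rw [← List.suffix_iff_eq_drop.mp hsw]
              exact (List.prefix_iff_eq_take.mp hpu).symm
            rw [hS] at hj
            exfalso
            simp only [Set.mem_insert_iff, Set.mem_singleton_iff] at hj
            rcases hj with h | h <;> omega
        · rw [hsw.eq_of_length hlen]

/-- A privileged prefix of a privileged word is also a suffix of it, and
symmetrically, a privileged suffix of a privileged word is also a prefix of it. -/
theorem privileged_prefix_is_suffix {A : Type*} (w u : List A)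
    (hw : Privileged w) (hu : Privileged u) :
    (u <+: w → u <:+ w) ∧ (u <:+ w → u <+: w) := by
  exact priv_key w.length w le_rfl hw u hu
end

section
/- Let w be a privileged word of length at least 2 and let u be its longest proper privileged prefix. Then w is a complete first return to u; in other words, the longest proper privileged prefix of w is its longest proper privileged border. The same holds with 'prefix' replaced by 'suffix'. -/
section Aux

variable {A : Type*}

/-- The set of occurrences of `u` in `w`. -/
private def occSet (u w : List A) : Set ℕ :=
  {i : ℕ | i + u.length ≤ w.length ∧ (w.drop i).take u.length = u}

private lemma occCount_eq (u w : List A) : occCount u w = (occSet u w).ncard := rfl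

private lemma occSet_finite (u w : List A) : (occSet u w).Finite := by
  apply Set.Finite.subset (Set.finite_Iic w.length)
  intro i hi
  exact le_trans (Nat.le_add_right i u.length) hi.1

private lemma zero_mem_occSet {u w : List A} (h : u <+: w) : 0 ∈ occSet u w := by
  constructor
  · simpa using h.length_le
  · simpa using (List.prefix_iff_eq_take.mp h).symm

private lemma sub_mem_occSet {u w : List A} (h : u <:+ w) :
    w.length - u.length ∈ occSet u w := by
  have hle := h.length_le
  constructor
  · omega
  · rw [← List.suffix_iff_eq_drop.mp h]
    exact List.take_length

private lemma occSet_eq_pair {u w : List A} (hcfr : IsCompleteFirstReturn w u)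
    (hlt : u.length < w.length) :
    occSet u w = {0, w.length - u.length} := by
  symm
  apply Set.eq_of_subset_of_ncard_le
  · intro i hi
    rcases hi with rfl | hi
    · exact zero_mem_occSet hcfr.1
    · simp only [Set.mem_singleton_iff] at hi
      subst hi
      exact sub_mem_occSet hcfr.2.1
  · have h1 : (occSet u w).ncard = 2 := hcfr.2.2
    have h2 : ({0, w.length - u.length} : Set ℕ).ncard = 2 := by
      apply Set.ncard_pair
      omega
    omega
  · exact occSet_finite u w

/-- A privileged prefix of a privileged word is a suffix of it. -/
private lemma priv_prefix_suffix :
    ∀ n (w u : List A), w.length ≤ n → Privileged w → Privileged u → u <+: w → u <:+ w := by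
  intro n
  induction n with
  | zero =>
    intro w u hlen hw hu hpre
    have : w = [] := List.length_eq_zero_iff.mp (Nat.le_zero.mp hlen)
    subst this
    have : u = [] := List.prefix_nil.mp hpre
    simp [this]
  | succ n IH =>
    intro w u hlen hw hu hpre
    by_cases heq : u = w
    · exact heq ▸ List.suffix_rfl
    have hul : u.length < w.length :=
      lt_of_le_of_ne hpre.length_le (fun h => heq (hpre.eq_of_length h))
    cases hw with
    | nil => simp at hul
    | single a =>
      have : u = [] := by
        have := hul
        simp only [List.length_singleton, Nat.lt_one_iff] at this
        exact List.length_eq_zero_iff.mp this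
      simp [this]
    | ret w u₀ h2 hlt hu₀ hcfr =>
      rcases le_or_gt u.length u₀.length with hle | hgt
      · have hpre' : u <+: u₀ := List.prefix_of_prefix_length_le hpre hcfr.1 hle
        have : u <:+ u₀ := IH u₀ u (by omega) hu₀ hu hpre'
        exact this.trans hcfr.2.1
      · exfalso
        have hpre₀ : u₀ <+: u := List.prefix_of_prefix_length_le hcfr.1 hpre hgt.le
        have hsuf₀ : u₀ <:+ u := IH u u₀ (by omega) hu hu₀ hpre₀
        obtain ⟨v, hv⟩ := hsuf₀
        obtain ⟨t, ht⟩ := hpre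
        have hmem : v.length ∈ occSet u₀ w := by
          constructor
          · have : v.length + u₀.length = u.length := by
              rw [← hv]; simp
            omega
          · rw [← ht, ← hv, List.append_assoc, List.drop_left, List.take_left]
        rw [occSet_eq_pair hcfr hlt] at hmem
        have hvlen : v.length + u₀.length = u.length := by rw [← hv]; simp
        rcases hmem with h0 | h1
        · simp only [h0] at hvlen; omega
        · simp only [Set.mem_singleton_iff] at h1
          omega

/-- A privileged suffix of a privileged word is a prefix of it. -/
private lemma priv_suffix_prefix :
    ∀ n (w u : List A), w.length ≤ n → Privileged w → Privileged u → u <:+ w → u <+: w := by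
  intro n
  induction n with
  | zero =>
    intro w u hlen hw hu hsuf
    have : w = [] := List.length_eq_zero_iff.mp (Nat.le_zero.mp hlen)
    subst this
    have : u = [] := List.suffix_nil.mp hsuf
    simp [this]
  | succ n IH =>
    intro w u hlen hw hu hsuf
    by_cases heq : u = w
    · exact heq ▸ List.prefix_rfl
    have hul : u.length < w.length :=
      lt_of_le_of_ne hsuf.length_le (fun h => heq (hsuf.eq_of_length h))
    cases hw with
    | nil => simp at hul
    | single a =>
      have : u = [] := by
        have := hul
        simp only [List.length_singleton, Nat.lt_one_iff] at this
        exact List.length_eq_zero_iff.mp this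
      simp [this]
    | ret w u₀ h2 hlt hu₀ hcfr =>
      rcases le_or_gt u.length u₀.length with hle | hgt
      · have hsuf' : u <:+ u₀ := List.suffix_of_suffix_length_le hsuf hcfr.2.1 hle
        have : u <+: u₀ := IH u₀ u (by omega) hu₀ hu hsuf'
        exact this.trans hcfr.1
      · exfalso
        have hsuf₀ : u₀ <:+ u := List.suffix_of_suffix_length_le hcfr.2.1 hsuf hgt.le
        have hpre₀ : u₀ <+: u := IH u u₀ (by omega) hu hu₀ hsuf₀
        have hmem : w.length - u.length ∈ occSet u₀ w := by
          constructor
          · omega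
          · rw [← List.suffix_iff_eq_drop.mp hsuf]
            exact (List.prefix_iff_eq_take.mp hpre₀).symm
        rw [occSet_eq_pair hcfr hlt] at hmem
        have := hsuf.length_le
        rcases hmem with h0 | h1
        · omega
        · simp only [Set.mem_singleton_iff] at h1; omega

end Aux

/-- If `w` is a privileged word of length at least 2 and `u` is its longest
proper privileged prefix (resp. suffix), then `w` is a complete first return to `u`;
in particular `u` is a border of `w`, indeed its longest proper privileged border. -/
theorem complete_return_to_longest_privileged_prefix {A : Type*} (w : List A)
    (hw : Privileged w) (hlen : 2 ≤ w.length) :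
    (∀ u : List A, Privileged u → u <+: w → u ≠ w →
      (∀ v : List A, Privileged v → v <+: w → v ≠ w → v.length ≤ u.length) →
      IsCompleteFirstReturn w u) ∧
    (∀ u : List A, Privileged u → u <:+ w → u ≠ w →
      (∀ v : List A, Privileged v → v <:+ w → v ≠ w → v.length ≤ u.length) →
      IsCompleteFirstReturn w u) := by
  cases hw with
  | nil => simp at hlen
  | single a => simp at hlen
  | ret w u₀ h2 hlt hu₀ hcfr =>
    constructor
    · intro u hu hpre hne hmax
      have hne₀ : u₀ ≠ w := fun h => by rw [h] at hlt; omega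
      have hle₁ : u₀.length ≤ u.length := hmax u₀ hu₀ hcfr.1 hne₀
      have hul : u.length < w.length :=
        lt_of_le_of_ne hpre.length_le (fun h => hne (hpre.eq_of_length h))
      have hle₂ : u.length ≤ u₀.length := by
        by_contra hgt
        push_neg at hgt
        have hpre₀ : u₀ <+: u := List.prefix_of_prefix_length_le hcfr.1 hpre hgt.le
        have hsuf₀ : u₀ <:+ u := priv_prefix_suffix u.length u u₀ le_rfl hu hu₀ hpre₀
        obtain ⟨v, hv⟩ := hsuf₀
        obtain ⟨t, ht⟩ := hpre
        have hmem : v.length ∈ occSet u₀ w := by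
          constructor
          · have : v.length + u₀.length = u.length := by rw [← hv]; simp
            omega
          · rw [← ht, ← hv, List.append_assoc, List.drop_left, List.take_left]
        rw [occSet_eq_pair hcfr hlt] at hmem
        have hvlen : v.length + u₀.length = u.length := by rw [← hv]; simp
        rcases hmem with h0 | h1
        · simp only [h0] at hvlen; omega
        · simp only [Set.mem_singleton_iff] at h1; omega
      have : u = u₀ := by
        apply (List.prefix_of_prefix_length_le hpre hcfr.1 hle₂).eq_of_length
        omega
      rw [this]
      exact hcfr
    · intro u hu hsuf hne hmax
      have hne₀ : u₀ ≠ w := fun h => by rw [h] at hlt; omega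
      have hle₁ : u₀.length ≤ u.length := hmax u₀ hu₀ hcfr.2.1 hne₀
      have hul : u.length < w.length :=
        lt_of_le_of_ne hsuf.length_le (fun h => hne (hsuf.eq_of_length h))
      have hle₂ : u.length ≤ u₀.length := by
        by_contra hgt
        push_neg at hgt
        have hsuf₀ : u₀ <:+ u := List.suffix_of_suffix_length_le hcfr.2.1 hsuf hgt.le
        have hpre₀ : u₀ <+: u := priv_suffix_prefix u.length u u₀ le_rfl hu hu₀ hsuf₀
        have hmem : w.length - u.length ∈ occSet u₀ w := by
          constructor
          · omega
          · rw [← List.suffix_iff_eq_drop.mp hsuf]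
            exact (List.prefix_iff_eq_take.mp hpre₀).symm
        rw [occSet_eq_pair hcfr hlt] at hmem
        rcases hmem with h0 | h1
        · omega
        · simp only [Set.mem_singleton_iff] at h1; omega
      have : u = u₀ := by
        apply (List.suffix_of_suffix_length_le hsuf hcfr.2.1 hle₂).eq_of_length
        omega
      rw [this]
      exact hcfr
end

section
/- A finite word w is rich if and only if the set of privileged factors of w equals the set of palindromic factors of w. -/
namespace RP
variable {A : Type*}

/-- `u` occurs in `w` starting at position `i`. -/
def OccAt (u w : List A) (i : ℕ) : Prop :=
  i + u.length ≤ w.length ∧ (w.drop i).take u.length = u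

noncomputable def occCount' (u w : List A) : ℕ := Set.ncard {i : ℕ | OccAt u w i}

lemma occAt_iff {u w : List A} {i : ℕ} :
    OccAt u w i ↔ ∃ s t : List A, w = s ++ u ++ t ∧ s.length = i := by
  constructor
  · rintro ⟨hle, htake⟩
    refine ⟨w.take i, w.drop (i + u.length), ?_, ?_⟩
    · have h1 : w.drop i = u ++ w.drop (i + u.length) := by
        conv_lhs => rw [← List.take_append_drop u.length (w.drop i)]
        rw [htake, List.drop_drop]
      conv_lhs => rw [← List.take_append_drop i w]
      rw [h1, List.append_assoc]
    · rw [List.length_take]; omega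
  · rintro ⟨s, t, rfl, rfl⟩
    constructor
    · simp
    · rw [List.append_assoc, List.drop_left, List.take_left]

lemma occAt_append {u v x y : List A} {j : ℕ} (h : OccAt u v j) :
    OccAt u (x ++ v ++ y) (x.length + j) := by
  rw [occAt_iff] at h ⊢
  obtain ⟨s, t, rfl, rfl⟩ := h
  exact ⟨x ++ s, t ++ y, by simp, by simp⟩

lemma occAt_of_suffix {u v w : List A} {j : ℕ} (hv : v <:+ w) (h : OccAt u v j) :
    OccAt u w (w.length - v.length + j) := by
  obtain ⟨x, rfl⟩ := hv
  have := occAt_append (x := x) (y := []) h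
  simpa using this

lemma occAt_of_prefix {u v w : List A} {j : ℕ} (hv : v <+: w) (h : OccAt u v j) :
    OccAt u w j := by
  obtain ⟨x, rfl⟩ := hv
  have := occAt_append (x := []) (y := x) h
  simpa using this

lemma occAt_of_infix {u v w : List A} {j : ℕ} (hv : v <:+: w) (h : OccAt u v j) :
    ∃ d, OccAt u w (d + j) := by
  obtain ⟨x, y, rfl⟩ := hv
  exact ⟨x.length, occAt_append h⟩

lemma occAt_take {u w : List A} {i n : ℕ} (h : OccAt u w i) (hn : i + u.length ≤ n) :
    OccAt u (w.take n) i := by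
  obtain ⟨hle, htake⟩ := h
  refine ⟨by rw [List.length_take]; omega, ?_⟩
  rw [List.drop_take, List.take_take, min_eq_left (by omega)]
  exact htake

lemma occAt_prefix_restrict {u v w : List A} {i : ℕ} (hv : v <+: w) (h : OccAt u w i)
    (hn : i + u.length ≤ v.length) : OccAt u v i := by
  have hvt : v = w.take v.length := List.prefix_iff_eq_take.mp hv
  rw [hvt]; exact occAt_take h hn

lemma occAt_suffix_restrict {u v w : List A} {i : ℕ} (hv : v <:+ w) (h : OccAt u w i)
    (hn : w.length - v.length ≤ i) : OccAt u v (i - (w.length - v.length)) := by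
  obtain ⟨x, rfl⟩ := hv
  have hx : x.length = (x ++ v).length - v.length := by simp
  rw [occAt_iff] at h ⊢
  obtain ⟨s, t, heq, rfl⟩ := h
  have hsx : x.length ≤ s.length := by omega
  have : v = s.drop x.length ++ u ++ t := by
    have := congrArg (List.drop x.length) heq
    rw [List.drop_left] at this
    rw [this, List.append_assoc, List.drop_append_of_le_length (by omega),
      List.append_assoc]
  exact ⟨s.drop x.length, t, this, by rw [List.length_drop]; omega⟩

lemma occAt_trans {u v w : List A} {i j : ℕ} (h1 : OccAt u v j) (h2 : OccAt v w i) :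
    OccAt u w (i + j) := by
  rw [occAt_iff] at h1 h2 ⊢
  obtain ⟨s, t, rfl, rfl⟩ := h1
  obtain ⟨s', t', rfl, rfl⟩ := h2
  exact ⟨s' ++ s, t ++ t', by simp, by simp⟩

lemma occAt_zero_iff {u w : List A} : OccAt u w 0 ↔ u <+: w := by
  constructor
  · rw [occAt_iff]; rintro ⟨s, t, rfl, hs⟩
    have : s = [] := by simpa using List.length_eq_zero_iff.mp hs
    subst this; simp
  · rintro ⟨t, rfl⟩; exact occAt_iff.mpr ⟨[], t, by simp, rfl⟩

lemma occAt_of_isSuffix {u w : List A} (h : u <:+ w) : OccAt u w (w.length - u.length) := by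
  obtain ⟨s, rfl⟩ := h
  have := occAt_append (x := s) (y := []) (occAt_zero_iff.mpr (List.prefix_refl u))
  simpa using this

lemma isSuffix_of_occAt {u w : List A} {i : ℕ} (h : OccAt u w i) (hi : i + u.length = w.length) :
    u <:+ w := by
  rw [occAt_iff] at h
  obtain ⟨s, t, rfl, rfl⟩ := h
  have hlen : t.length = 0 := by simp only [List.length_append] at hi; omega
  have : t = [] := List.length_eq_zero_iff.mp hlen
  subst this; simp

lemma infix_iff_occAt {u w : List A} : u <:+: w ↔ ∃ i, OccAt u w i := by
  constructor
  · rintro ⟨s, t, rfl⟩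
    exact ⟨s.length, occAt_iff.mpr ⟨s, t, by simp, rfl⟩⟩
  · rintro ⟨i, h⟩
    rw [occAt_iff] at h
    obtain ⟨s, t, rfl, -⟩ := h
    exact ⟨s, t, rfl⟩

lemma occAt_reverse {u w : List A} {i : ℕ} (h : OccAt u w i) :
    OccAt u.reverse w.reverse (w.length - u.length - i) := by
  rw [occAt_iff] at h ⊢
  obtain ⟨s, t, rfl, rfl⟩ := h
  refine ⟨t.reverse, s.reverse, by simp, by simp; omega⟩

lemma occSet_finite (u w : List A) : {i : ℕ | OccAt u w i}.Finite := by
  apply Set.Finite.subset (Set.finite_Iic w.length)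
  intro i hi
  simp only [Set.mem_Iic]
  have := hi.1
  omega



/- ### counting helpers -/

lemma two_le_occCount' {u w : List A} {i j : ℕ} (hi : OccAt u w i) (hj : OccAt u w j)
    (hij : i ≠ j) : 2 ≤ occCount' u w := by
  have hsub : {i, j} ⊆ {k : ℕ | OccAt u w k} := by
    intro k hk; rcases hk with rfl | rfl
    · exact hi
    · exact hj
  calc 2 = ({i, j} : Set ℕ).ncard := (Set.ncard_pair hij).symm
    _ ≤ _ := Set.ncard_le_ncard hsub (occSet_finite u w)

lemma three_le_occCount' {u w : List A} {i j k : ℕ} (hi : OccAt u w i) (hj : OccAt u w j)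
    (hk : OccAt u w k) (hij : i ≠ j) (hik : i ≠ k) (hjk : j ≠ k) : 3 ≤ occCount' u w := by
  have hsub : {i, j, k} ⊆ {m : ℕ | OccAt u w m} := by
    intro m hm; rcases hm with rfl | rfl | rfl
    · exact hi
    · exact hj
    · exact hk
  have h3 : ({i, j, k} : Set ℕ).ncard = 3 := by
    rw [Set.ncard_insert_of_notMem (by simp [hij, hik]) (by
      exact (Set.finite_singleton k).insert j), Set.ncard_pair hjk]
  calc 3 = ({i, j, k} : Set ℕ).ncard := h3.symm
    _ ≤ _ := Set.ncard_le_ncard hsub (occSet_finite u w)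

lemma occCount'_unique {u w : List A} (h : occCount' u w = 1) {i j : ℕ}
    (hi : OccAt u w i) (hj : OccAt u w j) : i = j := by
  obtain ⟨a, ha⟩ := Set.ncard_eq_one.mp h
  have h1 : i ∈ {k : ℕ | OccAt u w k} := hi
  have h2 : j ∈ {k : ℕ | OccAt u w k} := hj
  rw [ha] at h1 h2
  simp at h1 h2; omega

lemma occCount'_two_cases {u w : List A} (h : occCount' u w = 2) {i j k : ℕ}
    (hi : OccAt u w i) (hj : OccAt u w j) (hij : i ≠ j) (hk : OccAt u w k) :
    k = i ∨ k = j := by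
  have hsub : {i, j} ⊆ {m : ℕ | OccAt u w m} := by
    intro m hm; rcases hm with rfl | rfl
    · exact hi
    · exact hj
  have heq := Set.eq_of_subset_of_ncard_le hsub
    (by rw [Set.ncard_pair hij]; exact le_of_eq h) (occSet_finite u w)
  have : k ∈ {m : ℕ | OccAt u w m} := hk
  rw [← heq] at this
  simpa using this

lemma occCount'_eq_two {u w : List A} {i j : ℕ} (hi : OccAt u w i) (hj : OccAt u w j)
    (hij : i ≠ j) (hall : ∀ k, OccAt u w k → k = i ∨ k = j) : occCount' u w = 2 := by
  have : {m : ℕ | OccAt u w m} = {i, j} := by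
    ext m
    constructor
    · intro hm; rcases hall m hm with rfl | rfl <;> simp
    · intro hm; rcases hm with rfl | rfl
      · exact hi
      · exact hj
  rw [occCount', this, Set.ncard_pair hij]

lemma occCount'_reverse (u w : List A) : occCount' u.reverse w.reverse = occCount' u w := by
  have himg : (fun i => w.length - u.length - i) '' {i : ℕ | OccAt u w i}
      = {i : ℕ | OccAt u.reverse w.reverse i} := by
    ext j
    constructor
    · rintro ⟨i, hi, rfl⟩
      exact occAt_reverse hi
    · intro hj
      have hj' : OccAt u.reverse w.reverse j := hj
      have h2 := occAt_reverse hj'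
      simp only [List.reverse_reverse, List.length_reverse] at h2
      refine ⟨w.length - u.length - j, h2, ?_⟩
      have := hj'.1
      simp only [List.length_reverse] at this
      show w.length - u.length - (w.length - u.length - j) = j
      omega
  have hinj : Set.InjOn (fun i => w.length - u.length - i) {i : ℕ | OccAt u w i} := by
    intro a ha b hb hab
    have h1 := ha.1
    have h2 := hb.1
    simp only at hab
    omega
  rw [occCount', occCount', ← himg, Set.ncard_image_of_injOn hinj]

/- ### min/max helpers -/

lemma exists_max_nat {S : Set ℕ} (h : S.Finite) (hne : S.Nonempty) :
    ∃ m ∈ S, ∀ x ∈ S, x ≤ m := by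
  obtain ⟨m, hm, hmax⟩ := Set.Finite.exists_maximalFor id S h hne
  exact ⟨m, hm, fun x hx => le_of_not_gt fun hlt => by
    have := hmax (j := x) hx (le_of_lt hlt); simp at this; omega⟩

lemma exists_min_nat {S : Set ℕ} (hne : S.Nonempty) :
    ∃ m ∈ S, ∀ x ∈ S, m ≤ x := by
  classical
  obtain ⟨n, hn⟩ := hne
  have hex : ∃ k, k ∈ S := ⟨n, hn⟩
  exact ⟨Nat.find hex, Nat.find_spec hex, fun x hx => Nat.find_le hx⟩

/- ### suffix helpers -/

lemma suffix_eq_of_length {u v w : List A} (hu : u <:+ w) (hv : v <:+ w)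
    (h : u.length = v.length) : u = v := by
  rw [List.suffix_iff_eq_drop.mp hu, List.suffix_iff_eq_drop.mp hv, h]

lemma suffix_of_suffix_length_le {u v w : List A} (hu : u <:+ w) (hv : v <:+ w)
    (h : u.length ≤ v.length) : u <:+ v := by
  rw [← List.reverse_prefix] at hu hv ⊢
  exact List.prefix_of_prefix_length_le hu hv (by simpa using h)

/-- palindromic suffix of a palindrome is a prefix -/
lemma pal_suffix_prefix {u v : List A} (h : u <:+ v) (hu : u.reverse = u)
    (hv : v.reverse = v) : u <+: v := by
  exact List.reverse_suffix.mp (by rw [hu, hv]; exact h)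

/- ### bridge to the real occCount -/

lemma occCount_eq (u w : List A) : occCount u w = occCount' u w := rfl

lemma two_le_occCount {u w : List A} {i j : ℕ} (hi : OccAt u w i) (hj : OccAt u w j)
    (hij : i ≠ j) : 2 ≤ occCount u w := by
  rw [occCount_eq]; exact two_le_occCount' hi hj hij

lemma exists_two_occ {u w : List A} (h : 2 ≤ occCount u w) :
    ∃ i j, OccAt u w i ∧ OccAt u w j ∧ i ≠ j := by
  rw [occCount_eq, occCount'] at h
  obtain ⟨a, ha, b, hb, hab⟩ := (Set.one_lt_ncard (occSet_finite u w)).mp (by omega)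
  exact ⟨a, b, ha, hb, hab⟩

lemma occCount_unique {u w : List A} (h : occCount u w = 1) {i j : ℕ}
    (hi : OccAt u w i) (hj : OccAt u w j) : i = j :=
  occCount'_unique h hi hj

lemma occCount_eq_one {u w : List A} {i : ℕ} (hi : OccAt u w i)
    (hall : ∀ k, OccAt u w k → k = i) : occCount u w = 1 := by
  rw [occCount_eq, occCount']
  rw [Set.ncard_eq_one]
  exact ⟨i, Set.ext fun k => ⟨fun hk => hall k hk, fun hk => by
    simp at hk; subst hk; exact hi⟩⟩

lemma occCount_eq_two {u w : List A} {i j : ℕ} (hi : OccAt u w i) (hj : OccAt u w j)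
    (hij : i ≠ j) (hall : ∀ k, OccAt u w k → k = i ∨ k = j) : occCount u w = 2 := by
  rw [occCount_eq]; exact occCount'_eq_two hi hj hij hall

lemma occCount_reverse (u w : List A) : occCount u.reverse w.reverse = occCount u w := by
  rw [occCount_eq, occCount_eq]; exact occCount'_reverse u w

/- ### complete first return constructions -/

lemma cfr_suffix {u z : List A} {i : ℕ} (hu : u <:+ z) (hi : OccAt u z i)
    (hilt : i < z.length - u.length) :
    ∃ r, r <:+ z ∧ u.length < r.length ∧ IsCompleteFirstReturn r u := by
  set S : Set ℕ := {j | OccAt u z j ∧ j < z.length - u.length} with hS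
  have hfin : S.Finite := (occSet_finite u z).subset (fun j hj => hj.1)
  have hne : S.Nonempty := ⟨i, hi, hilt⟩
  obtain ⟨j', hj'S, hj'max⟩ := exists_max_nat hfin hne
  obtain ⟨hj'occ, hj'lt⟩ := hj'S
  have hulen : u.length ≤ z.length := hu.length_le
  set r : List A := z.drop j' with hr
  have hrsuf : r <:+ z := List.drop_suffix _ _
  have hrlen : r.length = z.length - j' := List.length_drop
  have hd : z.length - r.length = j' := by omega
  have hlt : u.length < r.length := by omega
  refine ⟨r, hrsuf, hlt, ?_, ?_, ?_⟩
  · -- u <+: r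
    have := occAt_suffix_restrict hrsuf hj'occ (by omega)
    rw [hd] at this
    simpa using occAt_zero_iff.mp (by simpa using this)
  · exact suffix_of_suffix_length_le hu hrsuf (le_of_lt hlt)
  · -- occCount u r = 2
    have h0 : OccAt u r 0 := by
      have := occAt_suffix_restrict hrsuf hj'occ (by omega)
      rw [hd] at this
      simpa using this
    have hlast : OccAt u r (r.length - u.length) :=
      occAt_of_isSuffix (suffix_of_suffix_length_le hu hrsuf (le_of_lt hlt))
    refine occCount_eq_two h0 hlast (by omega) ?_
    intro k hk
    have hkz : OccAt u z (j' + k) := by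
      have := occAt_of_suffix hrsuf hk
      rwa [hd] at this
    have hkle : j' + k + u.length ≤ z.length := hkz.1
    by_cases hcase : j' + k < z.length - u.length
    · have : j' + k ≤ j' := hj'max _ ⟨hkz, hcase⟩
      left; omega
    · right; omega

lemma cfr_prefix {u z : List A} {i : ℕ} (hu : u <+: z) (hi : OccAt u z i) (hpos : 0 < i) :
    ∃ r, r <+: z ∧ u.length < r.length ∧ r.length ≤ i + u.length ∧
      IsCompleteFirstReturn r u := by
  set S : Set ℕ := {j | OccAt u z j ∧ 0 < j} with hS
  have hne : S.Nonempty := ⟨i, hi, hpos⟩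
  obtain ⟨j', hj'S, hj'min⟩ := exists_min_nat hne
  obtain ⟨hj'occ, hj'pos⟩ := hj'S
  have hji : j' ≤ i := hj'min i ⟨hi, hpos⟩
  have hjlen : j' + u.length ≤ z.length := hj'occ.1
  set r : List A := z.take (j' + u.length) with hr
  have hrpre : r <+: z := List.take_prefix _ _
  have hrlen : r.length = j' + u.length := by
    rw [hr, List.length_take]; omega
  have h0 : OccAt u r 0 := by
    have hz0 : OccAt u z 0 := occAt_zero_iff.mpr hu
    exact occAt_take hz0 (by omega)
  have hjr : OccAt u r j' := occAt_take hj'occ le_rfl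
  refine ⟨r, hrpre, by omega, by omega, occAt_zero_iff.mp h0,
    isSuffix_of_occAt hjr (by omega), ?_⟩
  refine occCount_eq_two h0 hjr (by omega) ?_
  intro k hk
  have hkz : OccAt u z k := occAt_of_prefix hrpre hk
  have hkle : k + u.length ≤ r.length := hk.1
  by_cases hk0 : k = 0
  · left; exact hk0
  · right
    have : j' ≤ k := hj'min k ⟨hkz, by omega⟩
    omega

/- ### privileged borders occur at least twice -/

lemma priv_border_aux : ∀ n : ℕ, ∀ v : List A, v.length ≤ n → Privileged v →
    ∀ u : List A, Privileged u → u <:+ v → u.length < v.length → 2 ≤ occCount u v := by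
  intro n
  induction n with
  | zero => intro v hv _ u _ _ hlt; omega
  | succ n ih =>
    intro v hvn hv u hu hsuf hlt
    rcases eq_or_ne u [] with rfl | hune
    · have h0 : OccAt ([] : List A) v 0 := ⟨by simp, by simp⟩
      have h1 : OccAt ([] : List A) v v.length := ⟨by simp, by simp⟩
      exact two_le_occCount h0 h1 (by simp at hlt; omega)
    cases hv with
    | nil => simp at hlt
    | single a =>
      exfalso
      have : u.length = 0 := by
        have h1 := hlt
        simp only [List.length_singleton] at h1
        omega
      exact hune (List.length_eq_zero_iff.mp this)
    | ret _ t h2 hlt2 hpt hcfr =>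
      obtain ⟨htp, hts, htc⟩ := hcfr
      have htne : t ≠ [] := by
        intro h; subst h
        have h0 : OccAt ([] : List A) v 0 := ⟨by simp, by simp⟩
        have h1 : OccAt ([] : List A) v 1 := ⟨by simp; omega, by simp⟩
        have h2' : OccAt ([] : List A) v 2 := ⟨by simp; omega, by simp⟩
        have := three_le_occCount' h0 h1 h2' (by omega) (by omega) (by omega)
        rw [← occCount_eq, htc] at this
        omega
      rcases lt_trichotomy u.length t.length with hc | hc | hc
      · -- u shorter than t : find two occurrences inside prefix t
        have hust : u <:+ t := suffix_of_suffix_length_le hsuf hts (le_of_lt hc)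
        have h2occ : 2 ≤ occCount u t :=
          ih t (by omega) hpt u hu hust hc
        obtain ⟨i, j, hi, hj, hij⟩ := exists_two_occ h2occ
        exact two_le_occCount (occAt_of_prefix htp hi) (occAt_of_prefix htp hj) hij
      · have : u = t := suffix_eq_of_length hsuf hts hc
        subst this
        omega
      · -- t shorter than u : contradiction
        exfalso
        have htsu : t <:+ u := suffix_of_suffix_length_le hts hsuf (le_of_lt hc)
        have h2occ : 2 ≤ occCount t u := ih u (by omega) hu t hpt htsu hc
        obtain ⟨i, j, hi, hj, hij⟩ := exists_two_occ h2occ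
        have hd : 1 ≤ v.length - u.length := by omega
        have hiv := occAt_of_suffix hsuf hi
        have hjv := occAt_of_suffix hsuf hj
        have h0v : OccAt t v 0 := occAt_zero_iff.mpr htp
        have := three_le_occCount' h0v hiv hjv (by omega) (by omega) (by omega)
        rw [← occCount_eq, htc] at this
        omega

lemma priv_border {v u : List A} (hv : Privileged v) (hu : Privileged u)
    (hsuf : u <:+ v) (hlt : u.length < v.length) : 2 ≤ occCount u v :=
  priv_border_aux v.length v le_rfl hv u hu hsuf hlt
/- ### factor sets -/

def palset (w : List A) : Set (List A) := {u | u <:+: w ∧ u.reverse = u}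
def privset (w : List A) : Set (List A) := {u | u <:+: w ∧ Privileged u}

lemma factset_finite (w : List A) : {u : List A | u <:+: w}.Finite :=
  (List.finite_toSet w.sublists).subset fun u hu => List.mem_sublists.mpr hu.sublist

lemma palset_finite (w : List A) : (palset w).Finite :=
  (factset_finite w).subset fun u hu => hu.1

lemma privset_finite (w : List A) : (privset w).Finite :=
  (factset_finite w).subset fun u hu => hu.1

lemma infix_concat {w : List A} {a : A} {u : List A} (h : u <:+: w) : u <:+: w ++ [a] :=
  h.trans ⟨[], [a], by simp⟩

lemma palset_mono {w : List A} {a : A} : palset w ⊆ palset (w ++ [a]) :=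
  fun u hu => ⟨infix_concat hu.1, hu.2⟩

lemma privset_mono {w : List A} {a : A} : privset w ⊆ privset (w ++ [a]) :=
  fun u hu => ⟨infix_concat hu.1, hu.2⟩

/-- A factor of `w ++ [a]` which is not a factor of `w` is a nonempty suffix occurring
exactly once. -/
lemma new_factor {w : List A} {a : A} {u : List A} (hinf : u <:+: w ++ [a])
    (hnot : ¬ u <:+: w) :
    u ≠ [] ∧ u <:+ (w ++ [a]) ∧ occCount u (w ++ [a]) = 1 := by
  have hune : u ≠ [] := by rintro rfl; exact hnot List.nil_infix
  have hlen : (w ++ [a]).length = w.length + 1 := by simp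
  obtain ⟨i, hi⟩ := infix_iff_occAt.mp hinf
  have hkey : ∀ k, OccAt u (w ++ [a]) k → k + u.length = w.length + 1 := by
    intro k hk
    by_contra hne
    have hk1 := hk.1
    rw [hlen] at hk1
    have : k + u.length ≤ w.length := by omega
    have : OccAt u w k := occAt_prefix_restrict ⟨[a], rfl⟩ hk this
    exact hnot (infix_iff_occAt.mpr ⟨k, this⟩)
  have hiend := hkey i hi
  have hsuf : u <:+ (w ++ [a]) := isSuffix_of_occAt hi (by omega)
  refine ⟨hune, hsuf, occCount_eq_one hi ?_⟩
  intro k hk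
  have := hkey k hk
  omega

/-- at most one new palindromic factor when appending a letter -/
lemma new_pal_subsingleton {w : List A} {a : A} {x y : List A}
    (hx : x ∈ palset (w ++ [a]) \ palset w) (hy : y ∈ palset (w ++ [a]) \ palset w) :
    x = y := by
  have key : ∀ x y : List A, x ∈ palset (w ++ [a]) \ palset w →
      y ∈ palset (w ++ [a]) \ palset w → x.length ≤ y.length → x = y := by
    intro x y hx hy hle
    obtain ⟨⟨hxinf, hxpal⟩, hxn⟩ := hx
    obtain ⟨⟨hyinf, hypal⟩, hyn⟩ := hy
    have hxnot : ¬ x <:+: w := fun h => hxn ⟨h, hxpal⟩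
    have hynot : ¬ y <:+: w := fun h => hyn ⟨h, hypal⟩
    obtain ⟨hxne, hxsuf, hxocc⟩ := new_factor hxinf hxnot
    obtain ⟨hyne, hysuf, hyocc⟩ := new_factor hyinf hynot
    rcases eq_or_lt_of_le hle with heq | hlt
    · exact suffix_eq_of_length hxsuf hysuf heq
    · exfalso
      have hxy : x <:+ y := suffix_of_suffix_length_le hxsuf hysuf hle
      have hxpy : x <+: y := pal_suffix_prefix hxy hxpal hypal
      have h0 : OccAt x y 0 := occAt_zero_iff.mpr hxpy
      have h1 := occAt_of_suffix hysuf h0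
      have h2 : OccAt x (w ++ [a]) ((w ++ [a]).length - x.length) :=
        occAt_of_isSuffix hxsuf
      have hyl : y.length ≤ (w ++ [a]).length := hysuf.length_le
      have hne : (w ++ [a]).length - y.length + 0 ≠ (w ++ [a]).length - x.length := by
        omega
      have := two_le_occCount h1 h2 hne
      omega
  rcases le_total x.length y.length with h | h
  · exact key x y hx hy h
  · exact (key y x hy hx h).symm

/-- at most one new privileged factor when appending a letter -/
lemma new_priv_subsingleton {w : List A} {a : A} {x y : List A}
    (hx : x ∈ privset (w ++ [a]) \ privset w) (hy : y ∈ privset (w ++ [a]) \ privset w) :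
    x = y := by
  have key : ∀ x y : List A, x ∈ privset (w ++ [a]) \ privset w →
      y ∈ privset (w ++ [a]) \ privset w → x.length ≤ y.length → x = y := by
    intro x y hx hy hle
    obtain ⟨⟨hxinf, hxpriv⟩, hxn⟩ := hx
    obtain ⟨⟨hyinf, hypriv⟩, hyn⟩ := hy
    have hxnot : ¬ x <:+: w := fun h => hxn ⟨h, hxpriv⟩
    have hynot : ¬ y <:+: w := fun h => hyn ⟨h, hypriv⟩
    obtain ⟨hxne, hxsuf, hxocc⟩ := new_factor hxinf hxnot
    obtain ⟨hyne, hysuf, hyocc⟩ := new_factor hyinf hynot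
    rcases eq_or_lt_of_le hle with heq | hlt
    · exact suffix_eq_of_length hxsuf hysuf heq
    · exfalso
      have hxy : x <:+ y := suffix_of_suffix_length_le hxsuf hysuf hle
      have h2occ := priv_border hypriv hxpriv hxy hlt
      obtain ⟨i, j, hi, hj, hij⟩ := exists_two_occ h2occ
      have hi' := occAt_of_suffix hysuf hi
      have hj' := occAt_of_suffix hysuf hj
      have := two_le_occCount hi' hj' (by omega)
      omega
  rcases le_total x.length y.length with h | h
  · exact key x y hx hy h
  · exact (key y x hy hx h).symm

/-- there is a new privileged factor when appending a letter -/
lemma new_priv_exists (w : List A) (a : A) :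
    ∃ u : List A, Privileged u ∧ u <:+ (w ++ [a]) ∧ ¬ u <:+: w := by
  set z := w ++ [a] with hz
  set S : Set (List A) := {u | Privileged u ∧ u ≠ [] ∧ u <:+ z} with hS
  have hfin : S.Finite := (factset_finite z).subset fun u hu => hu.2.2.isInfix
  have hne : S.Nonempty := ⟨[a], Privileged.single a, by simp, ⟨w, rfl⟩⟩
  obtain ⟨u, huS, humax⟩ := Set.Finite.exists_maximalFor List.length S hfin hne
  obtain ⟨hupriv, hune, husuf⟩ := huS
  by_cases hu : u <:+: w
  · exfalso
    obtain ⟨i, hiw⟩ := infix_iff_occAt.mp hu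
    have hiz : OccAt u z i := occAt_of_prefix ⟨[a], rfl⟩ hiw
    have hzl : z.length = w.length + 1 := by simp [hz]
    have hilt : i < z.length - u.length := by
      have := hiw.1
      have hul : 1 ≤ u.length := by
        cases u with
        | nil => exact absurd rfl hune
        | cons b t => simp
      omega
    obtain ⟨r, hrsuf, hrlen, hrcfr⟩ := cfr_suffix husuf hiz hilt
    have hul : 1 ≤ u.length := by
      cases u with
      | nil => exact absurd rfl hune
      | cons b t => simp
    have hrpriv : Privileged r := Privileged.ret r u (by omega) hrlen hupriv hrcfr
    have hrne : r ≠ [] := by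
      intro h
      rw [h] at hrlen
      simp at hrlen
    have hrS : r ∈ S := ⟨hrpriv, hrne, hrsuf⟩
    have := humax (j := r) hrS (by omega)
    omega
  · exact ⟨u, hupriv, husuf, hu⟩

/- ### cardinality computations -/

lemma privset_nil : privset ([] : List A) = {([] : List A)} := by
  ext u
  simp only [privset, Set.mem_setOf_eq, Set.mem_singleton_iff, List.infix_nil]
  constructor
  · rintro ⟨h, -⟩; exact h
  · rintro rfl; exact ⟨rfl, Privileged.nil⟩

lemma palset_nil : palset ([] : List A) = {([] : List A)} := by
  ext u
  simp only [palset, Set.mem_setOf_eq, Set.mem_singleton_iff, List.infix_nil]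
  constructor
  · rintro ⟨h, -⟩; exact h
  · rintro rfl; exact ⟨rfl, rfl⟩

lemma privset_ncard (w : List A) : (privset w).ncard = w.length + 1 := by
  induction w using List.reverseRecOn with
  | nil => rw [privset_nil]; simp
  | append_singleton w a ih =>
    have hsub : privset w ⊆ privset (w ++ [a]) := privset_mono
    have hfin := privset_finite (w ++ [a])
    have hcard := Set.ncard_diff_add_ncard_of_subset hsub hfin
    obtain ⟨u, hupriv, husuf, hunot⟩ := new_priv_exists w a
    have humem : u ∈ privset (w ++ [a]) \ privset w :=
      ⟨⟨husuf.isInfix, hupriv⟩, fun h => hunot h.1⟩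
    have hd1 : (privset (w ++ [a]) \ privset w) = {u} := by
      apply Set.eq_singleton_iff_unique_mem.mpr
      exact ⟨humem, fun x hx => new_priv_subsingleton hx humem⟩
    rw [hd1] at hcard
    simp only [Set.ncard_singleton] at hcard
    simp only [List.length_append, List.length_singleton]
    omega

lemma palset_ncard_le (w : List A) : (palset w).ncard ≤ w.length + 1 := by
  induction w using List.reverseRecOn with
  | nil => rw [palset_nil]; simp
  | append_singleton w a ih =>
    have hsub : palset w ⊆ palset (w ++ [a]) := palset_mono
    have hfin := palset_finite (w ++ [a])
    have hcard := Set.ncard_diff_add_ncard_of_subset hsub hfin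
    have hd1 : (palset (w ++ [a]) \ palset w).ncard ≤ 1 := by
      rcases Set.eq_empty_or_nonempty (palset (w ++ [a]) \ palset w) with he | ⟨x, hx⟩
      · rw [he]; simp
      · have : (palset (w ++ [a]) \ palset w) = {x} :=
          Set.eq_singleton_iff_unique_mem.mpr ⟨hx, fun y hy => new_pal_subsingleton hy hx⟩
        rw [this]; simp
    simp only [List.length_append, List.length_singleton]
    omega

lemma richWord_iff (w : List A) : RichWord w ↔ (palset w).ncard = w.length + 1 :=
  Iff.rfl

lemma rich_concat {w : List A} {a : A} (h : RichWord (w ++ [a])) : RichWord w := by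
  rw [richWord_iff] at h ⊢
  have hsub : palset w ⊆ palset (w ++ [a]) := palset_mono
  have hfin := palset_finite (w ++ [a])
  have hcard := Set.ncard_diff_add_ncard_of_subset hsub hfin
  have hd1 : (palset (w ++ [a]) \ palset w).ncard ≤ 1 := by
    rcases Set.eq_empty_or_nonempty (palset (w ++ [a]) \ palset w) with he | ⟨x, hx⟩
    · rw [he]; simp
    · have : (palset (w ++ [a]) \ palset w) = {x} :=
        Set.eq_singleton_iff_unique_mem.mpr ⟨hx, fun y hy => new_pal_subsingleton hy hx⟩
      rw [this]; simp
  have hle := palset_ncard_le w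
  simp only [List.length_append, List.length_singleton] at h
  omega

lemma rich_diff {w : List A} {a : A} (h : RichWord (w ++ [a])) :
    ∃ Q : List A, palset (w ++ [a]) \ palset w = {Q} := by
  have hw := rich_concat h
  rw [richWord_iff] at h hw
  have hsub : palset w ⊆ palset (w ++ [a]) := palset_mono
  have hfin := palset_finite (w ++ [a])
  have hcard := Set.ncard_diff_add_ncard_of_subset hsub hfin
  simp only [List.length_append, List.length_singleton] at h
  have hdc : (palset (w ++ [a]) \ palset w).ncard = 1 := by omega
  exact Set.ncard_eq_one.mp hdc

lemma rich_take {z : List A} (h : RichWord z) (n : ℕ) : RichWord (z.take n) := by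
  induction z using List.reverseRecOn with
  | nil => simpa using h
  | append_singleton w a ih =>
    rcases le_or_gt n w.length with hn | hn
    · rw [List.take_append_of_le_length hn]
      exact ih (rich_concat h)
    · rcases le_or_gt ((w ++ [a]).length) n with hn2 | hn2
      · rwa [List.take_of_length_le hn2]
      · have : n = w.length := by simp at hn2; omega
        subst this
        rw [List.take_append_of_le_length le_rfl, List.take_of_length_le le_rfl]
        exact rich_concat h

/-- the longest palindromic suffix of a nonempty rich word is unioccurrent -/
lemma rich_lps {z : List A} (h : RichWord z) (hne : z ≠ []) :
    ∃ s : List A, s <:+ z ∧ s.reverse = s ∧ occCount s z = 1 ∧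
      ∀ t : List A, t <:+ z → t.reverse = t → t.length ≤ s.length := by
  rcases List.eq_nil_or_concat z with rfl | ⟨w, a, rfl⟩
  · exact absurd rfl hne
  rw [List.concat_eq_append] at *
  obtain ⟨Q, hQ⟩ := rich_diff h
  have hQmem : Q ∈ palset (w ++ [a]) \ palset w := by rw [hQ]; exact rfl
  obtain ⟨⟨hQinf, hQpal⟩, hQn⟩ := hQmem
  have hQnot : ¬ Q <:+: w := fun hh => hQn ⟨hh, hQpal⟩
  obtain ⟨hQne, hQsuf, hQocc⟩ := new_factor hQinf hQnot
  refine ⟨Q, hQsuf, hQpal, hQocc, ?_⟩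
  intro t htsuf htpal
  by_contra hlt
  push_neg at hlt
  have hQt : Q <:+ t := suffix_of_suffix_length_le hQsuf htsuf (le_of_lt hlt)
  have hQpt : Q <+: t := pal_suffix_prefix hQt hQpal htpal
  have h0 : OccAt Q t 0 := occAt_zero_iff.mpr hQpt
  have h1 := occAt_of_suffix htsuf h0
  have h2 : OccAt Q (w ++ [a]) ((w ++ [a]).length - Q.length) := occAt_of_isSuffix hQsuf
  have htl : t.length ≤ (w ++ [a]).length := htsuf.length_le
  have := two_le_occCount h1 h2 (by omega)
  omega

/- ### GJWZ: complete returns to palindromic factors of rich words are palindromes -/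

lemma rev_prefix_of_suffix {u v : List A} (h : u <:+ v) (hv : v.reverse = v) :
    u.reverse <+: v := by
  have := List.reverse_prefix.mpr h
  rwa [hv] at this

lemma rev_suffix_of_prefix {u v : List A} (h : u <+: v) (hv : v.reverse = v) :
    u.reverse <:+ v := by
  have := List.reverse_suffix.mpr h
  rwa [hv] at this

lemma pal_prefix_suffix {u v : List A} (h : u <+: v) (hu : u.reverse = u)
    (hv : v.reverse = v) : u <:+ v := by
  have := rev_suffix_of_prefix h hv
  rwa [hu] at this

lemma cfr_reverse {r q : List A} (hq : q.reverse = q) (h : IsCompleteFirstReturn r q) :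
    IsCompleteFirstReturn r.reverse q := by
  obtain ⟨hp, hs, hc⟩ := h
  refine ⟨?_, ?_, ?_⟩
  · have := List.reverse_prefix.mpr hs
    rwa [hq] at this
  · have := List.reverse_suffix.mpr hp
    rwa [hq] at this
  · calc occCount q r.reverse = occCount q.reverse r.reverse := by rw [hq]
      _ = occCount q r := occCount_reverse q r
      _ = 2 := hc

lemma gjwz_aux {z : List A} (hz : RichWord z) :
    ∀ n : ℕ, ∀ q r : List A, ∀ i : ℕ, q.reverse = q → IsCompleteFirstReturn r q →
      q.length < r.length → OccAt r z i → i + r.length ≤ n → r.reverse = r := by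
  intro n
  induction n using Nat.strong_induction_on with
  | _ n ihn =>
    intro q r i hq hcfr hqr hocc hle
    obtain ⟨hqp, hqs, hqc⟩ := hcfr
    set e := i + r.length with he
    have hez : e ≤ z.length := hocc.1
    set p := z.take e with hp
    have hpl : p.length = e := by
      rw [hp, List.length_take]; omega
    have hrp : r <:+ p := by
      have : OccAt r p i := occAt_take hocc le_rfl
      exact isSuffix_of_occAt this (by omega)
    have hrpocc : OccAt r p i := occAt_take hocc le_rfl
    have hrichp : RichWord p := rich_take hz e
    have hrne : r ≠ [] := by
      intro h; rw [h] at hqr; simp at hqr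
    have hpne : p ≠ [] := by
      intro h
      rw [h] at hpl
      simp at hpl
      have : 1 ≤ r.length := by
        cases r with
        | nil => exact absurd rfl hrne
        | cons b t => simp
      omega
    obtain ⟨s, hssuf, hspal, hsocc, hsmax⟩ := rich_lps hrichp hpne
    have hqsp : q <:+ p := hqs.trans hrp
    have hqls : q.length ≤ s.length := hsmax q hqsp hq
    rcases le_or_gt s.length r.length with hsr | hrs
    · -- |s| ≤ |r| : conclude r = s or contradiction
      have hsrsuf : s <:+ r := suffix_of_suffix_length_le hssuf hrp hsr
      have hqss : q <:+ s := suffix_of_suffix_length_le hqsp hssuf hqls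
      have hqps2 : q <+: s := pal_suffix_prefix hqss hq hspal
      have h0 : OccAt q s 0 := occAt_zero_iff.mpr hqps2
      have h1 : OccAt q r (r.length - s.length + 0) := occAt_of_suffix hsrsuf h0
      have hq0 : OccAt q r 0 := occAt_zero_iff.mpr hqp
      have hqlast : OccAt q r (r.length - q.length) := occAt_of_isSuffix hqs
      have hdist : (0 : ℕ) ≠ r.length - q.length := by omega
      have hcase := occCount'_two_cases (by rw [← occCount_eq]; exact hqc)
        hq0 hqlast hdist h1
      rcases hcase with hc1 | hc2
      · -- r.length - s.length = 0, so s = r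
        have : s.length = r.length := by omega
        have : s = r := suffix_eq_of_length hssuf hrp (by omega)
        rw [← this]; exact hspal
      · -- s.length = q.length, so s = q, contradicting unioccurrence
        exfalso
        have hsq : s.length = q.length := by omega
        have hseq : s = q := suffix_eq_of_length hssuf hqsp hsq
        have ho1 : OccAt q p (i + 0) := occAt_trans hq0 hrpocc
        have ho2 : OccAt q p (i + (r.length - q.length)) := occAt_trans hqlast hrpocc
        have := occCount_unique (by rw [hseq] at hsocc; exact hsocc) ho1 ho2
        omega
    · -- |r| < |s| : reverse of r occurs earlier
      have hrssuf : r <:+ s := suffix_of_suffix_length_le hrp hssuf (le_of_lt hrs)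
      have hrrev : r.reverse <+: s := rev_prefix_of_suffix hrssuf hspal
      have h0 : OccAt r.reverse s 0 := occAt_zero_iff.mpr hrrev
      have h1 : OccAt r.reverse p (p.length - s.length + 0) := occAt_of_suffix hssuf h0
      have h2 : OccAt r.reverse z (p.length - s.length + 0) :=
        occAt_of_prefix (List.take_prefix e z) h1
      have hsp : s.length ≤ p.length := hssuf.length_le
      have hm : (p.length - s.length + 0) + r.reverse.length < n := by
        simp only [List.length_reverse, add_zero]
        omega
      have := ihn ((p.length - s.length + 0) + r.reverse.length) hm q r.reverse
        (p.length - s.length + 0) hq (cfr_reverse hq ⟨hqp, hqs, hqc⟩)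
        (by simpa using hqr) h2 le_rfl
      simpa using this.symm

lemma pal_singleton (a : A) : ([a] : List A).reverse = [a] := rfl

/-- In a rich word `w ++ [a]` whose shorter part satisfies `privset w = palset w`,
the new palindromic suffix is privileged. -/
lemma new_pal_privileged {w : List A} {a : A} (hz : RichWord (w ++ [a]))
    (hPW : privset w = palset w) {Q : List A} (hQpal : Q.reverse = Q)
    (hQsuf : Q <:+ (w ++ [a])) (hQocc : occCount Q (w ++ [a]) = 1) (hQne : Q ≠ []) :
    Privileged Q := by
  set z := w ++ [a] with hzdef
  have hzl : z.length = w.length + 1 := by simp [hzdef]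
  have hQl : 1 ≤ Q.length := by
    cases Q with
    | nil => exact absurd rfl hQne
    | cons b t => simp
  rcases eq_or_lt_of_le hQl with h1 | h2
  · obtain ⟨b, rfl⟩ := List.length_eq_one_iff.mp h1.symm
    exact Privileged.single b
  -- |Q| ≥ 2 : find the longest proper palindromic suffix q of Q
  have hQ2 : 2 ≤ Q.length := h2
  set K : Set ℕ := {k | 0 < k ∧ (Q.drop k).reverse = Q.drop k} with hK
  have hKne : K.Nonempty := by
    refine ⟨Q.length - 1, by omega, ?_⟩
    have hl : (Q.drop (Q.length - 1)).length = 1 := by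
      rw [List.length_drop]; omega
    obtain ⟨b, hb⟩ := List.length_eq_one_iff.mp hl
    rw [hb]; simp
  obtain ⟨k, hkK, hkmin⟩ := exists_min_nat hKne
  obtain ⟨hkpos, hkpal⟩ := hkK
  have hkle : k ≤ Q.length - 1 := hkmin _ ⟨by omega, by
    have hl : (Q.drop (Q.length - 1)).length = 1 := by
      rw [List.length_drop]; omega
    obtain ⟨b, hb⟩ := List.length_eq_one_iff.mp hl
    rw [hb]; simp⟩
  set q : List A := Q.drop k with hqdef
  have hqsuf : q <:+ Q := List.drop_suffix _ _
  have hql : q.length = Q.length - k := List.length_drop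
  have hqlt : q.length < Q.length := by omega
  have hqne1 : 1 ≤ q.length := by omega
  have hqpre : q <+: Q := pal_suffix_prefix hqsuf hkpal hQpal
  -- q is a factor of w, hence privileged
  have hqw : q <:+: w := by
    have h0 : OccAt q Q 0 := occAt_zero_iff.mpr hqpre
    have h1 : OccAt q z (z.length - Q.length + 0) := occAt_of_suffix hQsuf h0
    have hQzl : Q.length ≤ z.length := hQsuf.length_le
    have h2 : OccAt q w (z.length - Q.length + 0) := by
      refine occAt_prefix_restrict ⟨[a], rfl⟩ h1 ?_
      omega
    exact infix_iff_occAt.mpr ⟨_, h2⟩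
  have hqpriv : Privileged q := by
    have : q ∈ palset w := ⟨hqw, hkpal⟩
    rw [← hPW] at this
    exact this.2
  -- q occurs exactly twice in Q
  have h0 : OccAt q Q 0 := occAt_zero_iff.mpr hqpre
  have hlast : OccAt q Q (Q.length - q.length) := occAt_of_isSuffix hqsuf
  have hocc2 : occCount q Q = 2 := by
    refine occCount_eq_two h0 hlast (by omega) ?_
    intro m hm
    by_contra hcon
    push_neg at hcon
    obtain ⟨hm0, hmlast⟩ := hcon
    have hmpos : 0 < m := Nat.pos_of_ne_zero hm0
    have hmle : m + q.length ≤ Q.length := hm.1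
    obtain ⟨r, hrpre, hrlen, hrlen2, hrcfr⟩ := cfr_prefix hqpre hm hmpos
    -- r is a factor of z
    have hrQ : OccAt r Q 0 := occAt_zero_iff.mpr hrpre
    have hrz : OccAt r z (z.length - Q.length + 0) := occAt_of_suffix hQsuf hrQ
    -- by GJWZ, r is a palindrome
    have hrpal : r.reverse = r := by
      refine gjwz_aux hz z.length q r _ hkpal hrcfr hrlen hrz ?_
      have := hrz.1
      omega
    -- r is then a proper palindromic suffix of Q longer than q : contradiction
    have hrsufQ : r <:+ Q := pal_prefix_suffix hrpre hrpal hQpal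
    have hrltQ : r.length < Q.length := by omega
    have hrk : Q.length - r.length ∈ K := by
      refine ⟨by omega, ?_⟩
      have : r = Q.drop (Q.length - r.length) := List.suffix_iff_eq_drop.mp hrsufQ
      rw [← this]
      exact hrpal
    have := hkmin _ hrk
    omega
  exact Privileged.ret Q q hQ2 hqlt hqpriv ⟨hqpre, hqsuf, hocc2⟩

lemma main_forward {w : List A} (h : RichWord w) : privset w = palset w := by
  induction w using List.reverseRecOn with
  | nil => rw [privset_nil, palset_nil]
  | append_singleton w a ih =>
    have hw : RichWord w := rich_concat h
    have hPW : privset w = palset w := ih hw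
    obtain ⟨Q, hQ⟩ := rich_diff h
    have hQmem : Q ∈ palset (w ++ [a]) \ palset w := by rw [hQ]; exact rfl
    obtain ⟨⟨hQinf, hQpal⟩, hQn⟩ := hQmem
    have hQnot : ¬ Q <:+: w := fun hh => hQn ⟨hh, hQpal⟩
    obtain ⟨hQne, hQsuf, hQocc⟩ := new_factor hQinf hQnot
    have hQpriv : Privileged Q := new_pal_privileged h hPW hQpal hQsuf hQocc hQne
    have hQprivmem : Q ∈ privset (w ++ [a]) \ privset w :=
      ⟨⟨hQinf, hQpriv⟩, fun hh => hQnot hh.1⟩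
    have hprivdiff : privset (w ++ [a]) \ privset w = {Q} :=
      Set.eq_singleton_iff_unique_mem.mpr
        ⟨hQprivmem, fun x hx => new_priv_subsingleton hx hQprivmem⟩
    have h1 : privset (w ++ [a]) = privset w ∪ {Q} := by
      rw [← hprivdiff, Set.union_diff_cancel privset_mono]
    have h2 : palset (w ++ [a]) = palset w ∪ {Q} := by
      rw [← hQ, Set.union_diff_cancel palset_mono]
    rw [h1, h2, hPW]

end RP

/-- A finite word is rich if and only if its set of privileged factors
equals its set of palindromic factors. -/
theorem rich_iff_privileged_eq_palindromic {A : Type*} (w : List A) :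
    RichWord w ↔
      {u : List A | u <:+: w ∧ Privileged u} =
        {u : List A | u <:+: w ∧ u.reverse = u} := by
  constructor
  · intro h
    have := RP.main_forward h
    exact this
  · intro h
    show Set.ncard {u : List A | u <:+: w ∧ u.reverse = u} = w.length + 1
    rw [← h]
    exact RP.privset_ncard w
end

section
/- Every finite word w has at least |w|+1 distinct complete return factors. -/
section
variable {A : Type*}

/-- Occurrence predicate. -/
def Occ (u p : List A) (i : ℕ) : Prop :=
  i + u.length ≤ p.length ∧ (p.drop i).take u.length = u

lemma occCount_def (u p : List A) : occCount u p = Set.ncard {i | Occ u p i} := rfl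

lemma occ_iff {u p : List A} {i : ℕ} :
    Occ u p i ↔ ∃ s t : List A, p = s ++ u ++ t ∧ s.length = i := by
  constructor
  · rintro ⟨h1, h2⟩
    refine ⟨p.take i, p.drop (i + u.length), ?_, ?_⟩
    · rw [List.append_assoc]
      conv_lhs => rw [← List.take_append_drop i p]
      congr 1
      conv_lhs => rw [← List.take_append_drop u.length (p.drop i)]
      rw [h2, List.drop_drop]
    · rw [List.length_take]
      omega
  · rintro ⟨s, t, rfl, rfl⟩
    constructor
    · simp
    · rw [List.append_assoc, List.drop_left, List.take_left]

lemma occ_suffix_self {u p : List A} (h : u <:+ p) : Occ u p (p.length - u.length) := by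
  obtain ⟨t, rfl⟩ := h
  exact occ_iff.mpr ⟨t, [], by simp, by simp⟩

lemma Occ.le {u p : List A} {i : ℕ} (h : Occ u p i) : i + u.length ≤ p.length := h.1

lemma occ_of_suffix {v u p : List A} {i : ℕ} (hvu : v <:+ u) (h : Occ u p i) :
    Occ v p (i + (u.length - v.length)) := by
  obtain ⟨t, rfl⟩ := hvu
  obtain ⟨s, t', rfl, rfl⟩ := occ_iff.mp h
  refine occ_iff.mpr ⟨s ++ t, t', by simp, by simp⟩

lemma occ_of_prefix_word {u p q : List A} {i : ℕ} (hpq : p <+: q) (h : Occ u p i) :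
    Occ u q i := by
  obtain ⟨r, rfl⟩ := hpq
  obtain ⟨s, t, rfl, rfl⟩ := occ_iff.mp h
  exact occ_iff.mpr ⟨s, t ++ r, by simp, rfl⟩

lemma occ_drop_iff {u p : List A} {j k : ℕ} (hj : j ≤ p.length) :
    Occ u (p.drop j) k ↔ Occ u p (j + k) := by
  constructor
  · intro h
    obtain ⟨s, t, he, rfl⟩ := occ_iff.mp h
    refine occ_iff.mpr ⟨p.take j ++ s, t, ?_, by simp; omega⟩
    conv_lhs => rw [← List.take_append_drop j p, he]
    simp
  · intro h
    obtain ⟨s, t, rfl, hs⟩ := occ_iff.mp h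
    refine occ_iff.mpr ⟨s.drop j, t, ?_, by simp; omega⟩
    rw [List.append_assoc, List.drop_append]
    have : j - s.length = 0 := by omega
    rw [this, List.drop_zero, List.append_assoc]

lemma occ_infix {u p : List A} {i : ℕ} (h : Occ u p i) : u <:+: p := by
  obtain ⟨s, t, rfl, _⟩ := occ_iff.mp h
  exact ⟨s, t, rfl⟩

lemma occSet_finite_s5 (u p : List A) : {i : ℕ | Occ u p i}.Finite :=
  (Set.finite_Iic p.length).subset fun i hi => by
    simpa using le_trans (Nat.le_add_right i u.length) hi.1

lemma two_le_occCount {u p : List A} {i j : ℕ} (hi : Occ u p i) (hj : Occ u p j)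
    (hij : i ≠ j) : 2 ≤ occCount u p := by
  rw [occCount_def]
  have := (Set.one_lt_ncard_iff (occSet_finite_s5 u p)).mpr ⟨i, j, hi, hj, hij⟩
  omega

lemma occCount_self (p : List A) : occCount p p = 1 := by
  rw [occCount_def]
  have : {i | Occ p p i} = {0} := by
    ext i
    simp only [Set.mem_setOf_eq, Set.mem_singleton_iff]
    constructor
    · intro h; have := h.1; omega
    · rintro rfl; exact ⟨by omega, by simp⟩
  rw [this, Set.ncard_singleton]

end

section
variable {A : Type*}

lemma occCount_nil (p : List A) : occCount ([] : List A) p = p.length + 1 := by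
  rw [occCount_def]
  have : {i | Occ ([] : List A) p i} = Set.Iic p.length := by
    ext i; simp [Occ]
  rw [this, ← Finset.coe_Iic, Set.ncard_coe_finset, Nat.card_Iic]

lemma exists_return_suffix (p : List A) (hp : p ≠ []) :
    ∃ u : List A, u ≠ [] ∧ u <:+ p ∧ IsCompleteReturnWord u ∧ occCount u p = 1 := by
  classical
  have hn1 : 1 ≤ p.length := List.length_pos_iff.mpr hp
  set n := p.length with hn
  set P : ℕ → Prop := fun k => 2 ≤ occCount (p.drop (n - k)) p with hP
  have hP0 : P 0 := by
    have h0 : p.drop (n - 0) = ([] : List A) := by simp [hn]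
    rw [hP]; simp only [h0, occCount_nil]; omega
  set m := Nat.findGreatest P n with hm
  have hPm : P m := Nat.findGreatest_spec (Nat.zero_le n) hP0
  have hmn : m ≤ n := Nat.findGreatest_le n
  set v := p.drop (n - m) with hv
  have hvlen : v.length = m := by rw [hv, List.length_drop]; omega
  have hvp : v <:+ p := List.drop_suffix _ _
  have hmn' : m < n := by
    rcases Nat.lt_or_ge m n with h | h
    · exact h
    · exfalso
      have hmn2 : m = n := le_antisymm hmn h
      have : v = p := by rw [hv, hmn2]; simp
      rw [hP] at hPm
      simp only [← hv, this, occCount_self] at hPm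
      omega
  -- suffix occurrence of v
  have hoccsuf : Occ v p (n - m) := by
    have := occ_suffix_self hvp
    rwa [hvlen, ← hn] at this
  -- a second occurrence
  have hsecond : ∃ i, Occ v p i ∧ i < n - m := by
    by_contra hcon
    push_neg at hcon
    have hsub : {i | Occ v p i} ⊆ {n - m} := by
      intro i hi
      have h1 : i + m ≤ n := by have := hi.1; rwa [hvlen] at this
      have := hcon i hi
      simp only [Set.mem_singleton_iff]
      omega
    have := Set.ncard_le_ncard hsub (Set.finite_singleton _)
    rw [Set.ncard_singleton] at this
    rw [hP] at hPm; rw [← hv] at hPm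
    rw [occCount_def] at hPm
    omega
  obtain ⟨i0, hi0occ, hi0lt⟩ := hsecond
  set Q : ℕ → Prop := fun i => i < n - m ∧ Occ v p i with hQ
  set j := Nat.findGreatest Q n with hj
  have hQj : Q j := Nat.findGreatest_spec (le_trans (le_of_lt hi0lt) (by omega)) ⟨hi0lt, hi0occ⟩
  have hjlt : j < n - m := hQj.1
  have hjmax : ∀ q, Occ v p q → q < n - m → q ≤ j := fun q hq hqlt =>
    Nat.le_findGreatest (by omega) ⟨hqlt, hq⟩
  have hqle : ∀ q, Occ v p q → q ≤ n - m := by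
    intro q hq
    have := hq.1; rw [hvlen] at this; omega
  set u := p.drop j with hu
  have hulen : u.length = n - j := by rw [hu, List.length_drop]
  have hune : u ≠ [] := by
    rw [← List.length_pos_iff, hulen]; omega
  have hOccuj : Occ u p j :=
    occ_iff.mpr ⟨p.take j, [], by simp [hu], by rw [List.length_take]; omega⟩
  -- every occurrence of u is at j
  have hoccu : ∀ k, Occ u p k → k = j := by
    intro k hk
    by_contra hne
    have h2 : 2 ≤ occCount u p := two_le_occCount hk hOccuj hne
    have hPnj : P (n - j) := by
      show 2 ≤ occCount (p.drop (n - (n - j))) p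
      have hnnj : n - (n - j) = j := by omega
      rw [hnnj, ← hu]
      exact h2
    have : n - j ≤ m := Nat.le_findGreatest (by omega) hPnj
    omega
  have hocc1 : occCount u p = 1 := by
    rw [occCount_def]
    have : {k | Occ u p k} = {j} := by
      ext k
      simp only [Set.mem_setOf_eq, Set.mem_singleton_iff]
      exact ⟨hoccu k, fun h => h ▸ hOccuj⟩
    rw [this, Set.ncard_singleton]
  -- v is a prefix of u
  have hOccv0 : Occ v u 0 := by
    rw [occ_drop_iff (by omega : j ≤ p.length), Nat.add_zero]
    exact hQj.2
  have hvpre : v <+: u := by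
    have h := hOccv0.2
    rw [List.drop_zero] at h
    exact h ▸ List.take_prefix v.length u
  -- v is a suffix of u
  have hvsuf : v <:+ u := by
    have : u.drop (n - m - j) = v := by
      rw [hu, List.drop_drop, hv]
      congr 1; omega
    exact this ▸ List.drop_suffix _ _
  -- occCount v u = 2
  have hocc2 : occCount v u = 2 := by
    rw [occCount_def]
    have hset : {k | Occ v u k} = {0, n - m - j} := by
      ext k
      simp only [Set.mem_setOf_eq, Set.mem_insert_iff, Set.mem_singleton_iff]
      constructor
      · intro hk
        have hkl : u.length = n - j := hulen
        have hkp : Occ v p (j + k) := by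
          rw [← occ_drop_iff (by omega : j ≤ p.length)]; exact hk
        have hle : j + k ≤ n - m := hqle _ hkp
        rcases Nat.lt_or_ge (j + k) (n - m) with h | h
        · have := hjmax _ hkp h
          left; omega
        · right; omega
      · rintro (rfl | rfl)
        · exact hOccv0
        · rw [occ_drop_iff (by omega : j ≤ p.length)]
          have : j + (n - m - j) = n - m := by omega
          rw [this]
          exact hoccsuf
    rw [hset, Set.ncard_pair (by omega : (0:ℕ) ≠ n - m - j)]
  exact ⟨u, hune, List.drop_suffix _ _, Or.inr ⟨v, hvpre, hvsuf, hocc2⟩, hocc1⟩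

end

/-- Every finite word `w` has at least `|w| + 1` distinct complete
return factors. -/
theorem at_least_length_succ_complete_return_factors {A : Type*} (w : List A) :
    w.length + 1 ≤ Set.ncard {u : List A | u <:+: w ∧ IsCompleteReturnWord u} := by
  classical
  set n := w.length with hn
  set S := {u : List A | u <:+: w ∧ IsCompleteReturnWord u} with hS
  have hSfin : S.Finite :=
    (w.sublists.finite_toSet).subset fun u hu => List.mem_sublists.mpr hu.1.sublist
  have hex : ∀ i : ℕ, 1 ≤ i → i ≤ n →
      ∃ u : List A, u ≠ [] ∧ u <:+ w.take i ∧ IsCompleteReturnWord u ∧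
        occCount u (w.take i) = 1 := by
    intro i h1 h2
    refine exists_return_suffix _ ?_
    rw [← List.length_pos_iff, List.length_take]
    omega
  choose F hF1 hF2 hF3 hF4 using hex
  set G : Fin (n + 1) → List A := fun i =>
    if h : 1 ≤ (i : ℕ) then F i h (Nat.lt_succ_iff.mp i.isLt) else [] with hG
  have hGlen : ∀ i : Fin (n + 1), ∀ h : 1 ≤ (i : ℕ),
      G i = F i h (Nat.lt_succ_iff.mp i.isLt) := by
    intro i h; simp [hG, h]
  have hGinj : Function.Injective G := by
    intro a b hab
    by_contra hne
    have key : ∀ a b : Fin (n + 1), (a : ℕ) < (b : ℕ) → G a ≠ G b := by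
      intro a b hlt
      rcases Nat.lt_or_ge (a : ℕ) 1 with ha | ha
      · have ha0 : (a : ℕ) = 0 := by omega
        have hb : 1 ≤ (b : ℕ) := by omega
        have h1 : G a = [] := by simp [hG, ha0]
        rw [hGlen b hb, h1]
        exact fun h => hF1 b hb _ h.symm
      · intro hEq
        have hb : 1 ≤ (b : ℕ) := by omega
        rw [hGlen a ha, hGlen b hb] at hEq
        set u := F b hb (Nat.lt_succ_iff.mp b.isLt) with hu
        have hbn : (b : ℕ) ≤ n := Nat.lt_succ_iff.mp b.isLt
        have han : (a : ℕ) ≤ n := Nat.lt_succ_iff.mp a.isLt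
        have hsufa : u <:+ w.take (a : ℕ) := hEq ▸ hF2 a ha han
        have hsufb : u <:+ w.take (b : ℕ) := hF2 b hb hbn
        have htla : (w.take (a : ℕ)).length = (a : ℕ) := by
          rw [List.length_take]; omega
        have htlb : (w.take (b : ℕ)).length = (b : ℕ) := by
          rw [List.length_take]; omega
        have hula : u.length ≤ (a : ℕ) := by
          have := hsufa.length_le; omega
        have hOa : Occ u (w.take (b : ℕ)) ((a : ℕ) - u.length) := by
          have h0 : Occ u (w.take (a : ℕ)) ((a : ℕ) - u.length) := by
            have := occ_suffix_self hsufa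
            rwa [htla] at this
          refine occ_of_prefix_word ?_ h0
          have hteq : (w.take (b : ℕ)).take (a : ℕ) = w.take (a : ℕ) := by
            rw [List.take_take]; congr 1; omega
          exact hteq ▸ List.take_prefix _ _
        have hOb : Occ u (w.take (b : ℕ)) ((b : ℕ) - u.length) := by
          have := occ_suffix_self hsufb
          rwa [htlb] at this
        have h2 : 2 ≤ occCount u (w.take (b : ℕ)) :=
          two_le_occCount hOa hOb (by omega)
        have h1 : occCount u (w.take (b : ℕ)) = 1 := hF4 b hb hbn
        omega
    rcases Nat.lt_trichotomy (a : ℕ) (b : ℕ) with h | h | h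
    · exact key a b h hab
    · exact hne (Fin.ext h)
    · exact key b a h hab.symm
  have hsub : ↑(Finset.image G Finset.univ) ⊆ S := by
    intro u hu
    simp only [Finset.coe_image, Finset.coe_univ, Set.image_univ, Set.mem_range] at hu
    obtain ⟨i, rfl⟩ := hu
    rcases Nat.lt_or_ge (i : ℕ) 1 with hi | hi
    · have hi0 : (i : ℕ) = 0 := by omega
      have h1 : G i = [] := by simp [hG, hi0]
      rw [h1]
      exact ⟨List.nil_infix, Or.inl rfl⟩
    · have hin : (i : ℕ) ≤ n := Nat.lt_succ_iff.mp i.isLt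
      rw [hGlen i hi]
      refine ⟨?_, hF3 i hi hin⟩
      exact ((hF2 i hi hin).isInfix).trans (List.take_prefix _ w).isInfix
  calc n + 1 = (Finset.image G Finset.univ).card := by
        rw [Finset.card_image_of_injective _ hGinj, Finset.card_univ, Fintype.card_fin]
      _ = (↑(Finset.image G Finset.univ) : Set (List A)).ncard := by
        rw [Set.ncard_coe_finset]
      _ ≤ S.ncard := Set.ncard_le_ncard hsub hSfin
end

section
/- Let w be a finite word. If some position of w introduces exactly one complete return factor, then that factor is privileged. Moreover, w has exactly |w|+1 distinct complete return factors if and only if every complete return factor of w is privileged. -/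
namespace PrivAux
variable {A : Type*}

def occursAt (u w : List A) (i : ℕ) : Prop :=
  i + u.length ≤ w.length ∧ (w.drop i).take u.length = u

noncomputable def occFinset (u w : List A) : Finset ℕ :=
  @Finset.filter _ (occursAt u w) (Classical.decPred _) (Finset.range (w.length + 1))

lemma mem_occFinset {u w : List A} {i : ℕ} : i ∈ occFinset u w ↔ occursAt u w i := by
  classical
  simp only [occFinset, Finset.mem_filter, Finset.mem_range]
  refine ⟨fun h => h.2, fun h => ⟨Nat.lt_succ_of_le (le_trans (Nat.le_add_right _ _) h.1), h⟩⟩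

lemma occCount_eq_card (u w : List A) : occCount u w = (occFinset u w).card := by
  have h : {i : ℕ | i + u.length ≤ w.length ∧ (w.drop i).take u.length = u}
      = ↑(occFinset u w) := by
    ext i; simp [mem_occFinset, occursAt]
  rw [occCount, h, Set.ncard_coe_finset]

lemma occursAt_le {u w : List A} {i : ℕ} (h : occursAt u w i) : i + u.length ≤ w.length := h.1

lemma occursAt_of_suffix {u w : List A} (h : u <:+ w) :
    occursAt u w (w.length - u.length) := by
  obtain ⟨t, rfl⟩ := h
  have hl : (t ++ u).length - u.length = t.length := by simp
  exact ⟨by simp [hl], by rw [hl, List.drop_left, List.take_length]⟩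

lemma occursAt_zero {u w : List A} (h : u <+: w) : occursAt u w 0 := by
  obtain ⟨t, rfl⟩ := h
  exact ⟨by simp, by simp [List.take_left]⟩

lemma occursAt_infix {u w : List A} {i : ℕ} (h : occursAt u w i) : u <:+: w := by
  obtain ⟨h1, h2⟩ := h
  refine ⟨w.take i, w.drop (i + u.length), ?_⟩
  calc w.take i ++ u ++ w.drop (i + u.length)
      = w.take i ++ ((w.drop i).take u.length ++ w.drop (i + u.length)) := by
        rw [h2, List.append_assoc]
    _ = w.take i ++ w.drop i := by rw [List.drop_take_append_drop]
    _ = w := List.take_append_drop i w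

lemma exists_occursAt {u w : List A} (h : u <:+: w) : ∃ i, occursAt u w i := by
  obtain ⟨x, y, rfl⟩ := h
  refine ⟨x.length, ⟨by simp, ?_⟩⟩
  rw [List.append_assoc, List.drop_left, List.take_left]

lemma occursAt_take_iff {u w : List A} {n k : ℕ} :
    occursAt u (w.take n) k ↔ occursAt u w k ∧ k + u.length ≤ n := by
  constructor
  · rintro ⟨h1, h2⟩
    rw [List.length_take] at h1
    rw [List.drop_take, List.take_take, Nat.min_eq_left (by omega)] at h2
    exact ⟨⟨by omega, h2⟩, by omega⟩
  · rintro ⟨⟨h1, h2⟩, h3⟩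
    refine ⟨by rw [List.length_take]; omega, ?_⟩
    rw [List.drop_take, List.take_take, Nat.min_eq_left (by omega)]
    exact h2

lemma occursAt_drop_iff {u w : List A} {n k : ℕ} (hn : n ≤ w.length) :
    occursAt u (w.drop n) k ↔ occursAt u w (n + k) := by
  constructor
  · rintro ⟨h1, h2⟩
    rw [List.length_drop] at h1
    rw [List.drop_drop] at h2
    exact ⟨by omega, h2⟩
  · rintro ⟨h1, h2⟩
    exact ⟨by rw [List.length_drop]; omega, by rw [List.drop_drop]; exact h2⟩

lemma occCount_nil (w : List A) : occCount ([] : List A) w = w.length + 1 := by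
  rw [occCount_eq_card]
  have h : occFinset ([] : List A) w = Finset.range (w.length + 1) := by
    ext i
    simp [mem_occFinset, occursAt, Nat.lt_succ_iff]
  rw [h, Finset.card_range]

lemma occCount_pos {u w : List A} (h : u <:+: w) : 1 ≤ occCount u w := by
  rw [occCount_eq_card]
  obtain ⟨i, hi⟩ := exists_occursAt h
  exact Finset.card_pos.2 ⟨i, mem_occFinset.2 hi⟩

lemma occCount_take_le (u w : List A) (n : ℕ) : occCount u (w.take n) ≤ occCount u w := by
  rw [occCount_eq_card, occCount_eq_card]
  refine Finset.card_le_card fun k hk => ?_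
  exact mem_occFinset.2 (occursAt_take_iff.1 (mem_occFinset.1 hk)).1

lemma occCount_le_of_prefix {v w : List A} (u : List A) (h : v <+: w) :
    occCount u v ≤ occCount u w := by
  rw [List.prefix_iff_eq_take.1 h]
  exact occCount_take_le u w v.length

open Classical in
lemma occFinset_drop (u w : List A) {n : ℕ} (hn : n ≤ w.length) :
    (occFinset u (w.drop n)).image (fun k => n + k)
      = (occFinset u w).filter (fun k => n ≤ k) := by
  ext k
  simp only [Finset.mem_image, Finset.mem_filter, mem_occFinset]
  constructor
  · rintro ⟨j, hj, rfl⟩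
    exact ⟨(occursAt_drop_iff hn).1 hj, Nat.le_add_right _ _⟩
  · rintro ⟨hk, hnk⟩
    refine ⟨k - n, (occursAt_drop_iff hn).2 ?_, by omega⟩
    have : n + (k - n) = k := by omega
    rw [this]; exact hk

open Classical in
lemma occCount_drop (u w : List A) {n : ℕ} (hn : n ≤ w.length) :
    occCount u (w.drop n) = ((occFinset u w).filter (fun k => n ≤ k)).card := by
  rw [occCount_eq_card, ← occFinset_drop u w hn,
    Finset.card_image_of_injective _ fun a b h => by omega]

lemma occCount_le_of_suffix {v w : List A} (u : List A) (h : v <:+ w) :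
    occCount u v ≤ occCount u w := by
  classical
  have h2 := List.suffix_iff_eq_drop.1 h
  rw [h2, occCount_drop u w (by omega), occCount_eq_card]
  exact Finset.card_le_card (Finset.filter_subset _ _)

lemma occCount_le_of_infix {v w : List A} (u : List A) (h : v <:+: w) :
    occCount u v ≤ occCount u w := by
  obtain ⟨x, y, rfl⟩ := h
  exact le_trans (occCount_le_of_prefix u ⟨y, rfl⟩)
    (occCount_le_of_suffix u ⟨x, by rw [List.append_assoc]⟩)

lemma occursAt_eq_of_occCount_one {u w : List A} {i j : ℕ} (h : occCount u w = 1)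
    (hi : occursAt u w i) (hj : occursAt u w j) : i = j := by
  rw [occCount_eq_card, Finset.card_eq_one] at h
  obtain ⟨a, ha⟩ := h
  have h1 := mem_occFinset.2 hi
  have h2 := mem_occFinset.2 hj
  rw [ha, Finset.mem_singleton] at h1 h2
  omega

lemma occCount_self (w : List A) : occCount w w = 1 := by
  rw [occCount_eq_card]
  have h : occFinset w w = {0} := by
    ext i
    simp only [mem_occFinset, Finset.mem_singleton]
    constructor
    · intro h; have := h.1; omega
    · rintro rfl; exact occursAt_zero (List.prefix_refl w)
  rw [h, Finset.card_singleton]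

lemma exists_longer_return {s p : List A} (hs : s <:+ p) (h2 : 2 ≤ occCount s p) :
    ∃ v, v <:+ p ∧ s.length < v.length ∧ IsCompleteFirstReturn v s := by
  classical
  set top := p.length - s.length with htop
  have hsle : s.length ≤ p.length := hs.length_le
  have htopmem : top ∈ occFinset s p := mem_occFinset.2 (occursAt_of_suffix hs)
  have hcard : 2 ≤ (occFinset s p).card := by rwa [occCount_eq_card] at h2
  have hE : ((occFinset s p).erase top).Nonempty := by
    rw [← Finset.card_pos, Finset.card_erase_of_mem htopmem]; omega
  set j := ((occFinset s p).erase top).max' hE with hj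
  have hjmem' : j ∈ (occFinset s p).erase top := Finset.max'_mem _ hE
  have hjmem : j ∈ occFinset s p := Finset.mem_of_mem_erase hjmem'
  have hjne : j ≠ top := Finset.ne_of_mem_erase hjmem'
  have hjocc : occursAt s p j := mem_occFinset.1 hjmem
  have hjle : j + s.length ≤ p.length := hjocc.1
  have hjlt : j < top := by
    have : j ≤ top := by omega
    omega
  refine ⟨p.drop j, List.drop_suffix j p, ?_, ?_, ?_, ?_⟩
  · rw [List.length_drop]; omega
  · -- s <+: p.drop j
    rw [List.prefix_iff_eq_take]
    exact hjocc.2.symm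
  · -- s <:+ p.drop j
    exact List.suffix_of_suffix_length_le hs (List.drop_suffix j p)
      (by rw [List.length_drop]; omega)
  · -- occCount s (p.drop j) = 2
    rw [occCount_drop s p (by omega)]
    have hfe : (occFinset s p).filter (fun k => j ≤ k) = {j, top} := by
      ext k
      simp only [Finset.mem_filter, Finset.mem_insert, Finset.mem_singleton]
      constructor
      · rintro ⟨hk, hjk⟩
        by_cases hkt : k = top
        · exact Or.inr hkt
        · left
          have : k ≤ j := Finset.le_max' _ k (Finset.mem_erase.2 ⟨hkt, hk⟩)
          omega
      · rintro (rfl | rfl)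
        · exact ⟨hjmem, le_refl _⟩
        · exact ⟨htopmem, by omega⟩
    rw [hfe, Finset.card_pair (by omega)]

lemma exists_priv_unioccurrent_suffix (p : List A) (hp : p ≠ []) :
    ∃ s : List A, s ≠ [] ∧ Privileged s ∧ s <:+ p ∧ occCount s p = 1 := by
  have main : ∀ m : ℕ, ∀ s : List A, s ≠ [] → Privileged s → s <:+ p →
      p.length - s.length ≤ m →
      ∃ t : List A, t ≠ [] ∧ Privileged t ∧ t <:+ p ∧ occCount t p = 1 := by
    intro m
    induction m with
    | zero =>
      intro s h1 h2 h3 h4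
      have hle : s.length ≤ p.length := h3.length_le
      have : s = p := h3.eq_of_length (by omega)
      subst this
      exact ⟨s, h1, h2, h3, occCount_self s⟩
    | succ m ih =>
      intro s h1 h2 h3 h4
      by_cases hc : occCount s p = 1
      · exact ⟨s, h1, h2, h3, hc⟩
      · have hpos : 1 ≤ occCount s p := occCount_pos h3.isInfix
        have h2' : 2 ≤ occCount s p := by omega
        obtain ⟨v, hv1, hv2, hv3⟩ := exists_longer_return h3 h2'
        have hvlen : v.length ≤ p.length := hv1.length_le
        have hsne : 1 ≤ s.length := by
          cases s with
          | nil => exact absurd rfl h1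
          | cons a l => simp
        refine ih v ?_ ?_ hv1 (by omega)
        · intro hnil; rw [hnil] at hv2; simp at hv2
        · exact Privileged.ret v s (by omega) hv2 h2 hv3
  obtain ⟨q, a, rfl⟩ := (List.eq_nil_or_concat p).resolve_left hp
  exact main (q.concat a).length [a] (by simp) (Privileged.single a)
    ⟨q, List.concat_eq_append.symm⟩ (by omega)

lemma priv_suffix_twice :
    ∀ n : ℕ, ∀ s t : List A, t.length ≤ n → Privileged s → Privileged t →
      s <:+ t → s.length < t.length → 2 ≤ occCount s t := by
  intro n
  induction n with
  | zero =>
    intro s t hn _ _ _ hlt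
    omega
  | succ n ih =>
    intro s t hn hs ht hsuf hlt
    by_cases hsnil : s = []
    · subst hsnil
      rw [occCount_nil]
      simp at hlt
      omega
    cases ht with
    | nil => simp at hlt
    | single a =>
      exfalso
      apply hsnil
      apply List.length_eq_zero_iff.1
      simp only [List.length_singleton] at hlt
      omega
    | ret t u h2t hut hu hret =>
      obtain ⟨hupre, husuf, huocc⟩ := hret
      rcases lt_trichotomy s.length u.length with hc | hc | hc
      · -- s is a shorter privileged suffix of u
        have hsu : s <:+ u := List.suffix_of_suffix_length_le hsuf husuf (by omega)
        have h2 : 2 ≤ occCount s u := ih s u (by omega) hs hu hsu hc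
        exact le_trans h2 (occCount_le_of_prefix s hupre)
      · -- s = u
        have hsu : s <:+ u := List.suffix_of_suffix_length_le hsuf husuf (by omega)
        have : s = u := hsu.eq_of_length hc
        subst this
        omega
      · -- |u| < |s| : impossible
        exfalso
        have hus : u <:+ s := List.suffix_of_suffix_length_le husuf hsuf (by omega)
        have h2 : 2 ≤ occCount u s := ih u s (by omega) hu hs hus hc
        rw [occCount_eq_card] at h2
        have h2' : 1 < (occFinset u s).card := by omega
        obtain ⟨j₁, hj₁, j₂, hj₂, hjne⟩ := Finset.one_lt_card.1 h2'
        set d := t.length - s.length with hd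
        have hdpos : 1 ≤ d := by
          have := hsuf.length_le
          omega
        have hseq : s = t.drop d := List.suffix_iff_eq_drop.1 hsuf
        have hdle : d ≤ t.length := by omega
        have hocc1 : occursAt u t (d + j₁) := (occursAt_drop_iff hdle).1
          (by rw [← hseq]; exact mem_occFinset.1 hj₁)
        have hocc2 : occursAt u t (d + j₂) := (occursAt_drop_iff hdle).1
          (by rw [← hseq]; exact mem_occFinset.1 hj₂)
        have hocc0 : occursAt u t 0 := occursAt_zero hupre
        have hsub : ({0, d + j₁, d + j₂} : Finset ℕ) ⊆ occFinset u t := by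
          intro k hk
          simp only [Finset.mem_insert, Finset.mem_singleton] at hk
          rcases hk with rfl | rfl | rfl
          · exact mem_occFinset.2 hocc0
          · exact mem_occFinset.2 hocc1
          · exact mem_occFinset.2 hocc2
        have hc3 : ({0, d + j₁, d + j₂} : Finset ℕ).card = 3 := by
          rw [Finset.card_insert_of_notMem (by simp; omega), Finset.card_pair (by omega)]
        have := Finset.card_le_card hsub
        rw [hc3, ← occCount_eq_card, huocc] at this
        omega

lemma priv_unioccurrent_unique {s t p : List A} (hs : Privileged s) (ht : Privileged t)
    (hssuf : s <:+ p) (htsuf : t <:+ p) (hs1 : occCount s p = 1) (ht1 : occCount t p = 1) :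
    s = t := by
  have key : ∀ s' t' : List A, Privileged s' → Privileged t' → s' <:+ p → t' <:+ p →
      occCount s' p = 1 → s'.length ≤ t'.length → s' <:+ t' := by
    intro s' t' hs' ht' hssuf' htsuf' hs1' hle
    have hst : s' <:+ t' := List.suffix_of_suffix_length_le hssuf' htsuf' hle
    exact hst
  rcases le_total s.length t.length with hle | hle
  · have hst : s <:+ t := List.suffix_of_suffix_length_le hssuf htsuf hle
    rcases eq_or_lt_of_le hle with heq | hlt
    · exact hst.eq_of_length heq
    · exfalso
      have h2 : 2 ≤ occCount s t := priv_suffix_twice t.length s t le_rfl hs ht hst hlt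
      have := occCount_le_of_suffix s htsuf
      omega
  · have hst : t <:+ s := List.suffix_of_suffix_length_le htsuf hssuf hle
    rcases eq_or_lt_of_le hle with heq | hlt
    · exact (hst.eq_of_length heq).symm
    · exfalso
      have h2 : 2 ≤ occCount t s := priv_suffix_twice s.length t s le_rfl ht hs hst hlt
      have := occCount_le_of_suffix t hssuf
      omega

lemma introduces_ne_nil {w : List A} {i : ℕ} {u : List A} (h : Introduces w i u) :
    u ≠ [] := by
  rintro rfl
  obtain ⟨h1, h2, h3, h4⟩ := h
  rw [occCount_nil, List.length_take] at h4
  omega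

lemma length_le_of_introduces {w : List A} {i : ℕ} {u : List A} (h : Introduces w i u) :
    u.length ≤ i := by
  have h' := h.2.2.1.length_le
  rw [List.length_take] at h'
  omega

lemma introduces_occursAt {w : List A} {i : ℕ} {u : List A} (h : Introduces w i u) :
    occursAt u (w.take i) (i - u.length) := by
  have h' := occursAt_of_suffix h.2.2.1
  rwa [List.length_take, Nat.min_eq_left h.2.1] at h'

lemma introduces_pos_unique {w : List A} {u : List A} {i i' : ℕ}
    (h : Introduces w i u) (h' : Introduces w i' u) : i = i' := by
  suffices key : ∀ i i' : ℕ, i ≤ i' → Introduces w i u → Introduces w i' u → i = i' by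
    rcases le_total i i' with hle | hle
    · exact key i i' hle h h'
    · exact (key i' i hle h' h).symm
  intro i i' hle hi hi'
  have hu1 : u.length ≤ i := length_le_of_introduces hi
  have o1 : occursAt u (w.take i) (i - u.length) := introduces_occursAt hi
  have o1' : occursAt u (w.take i') (i - u.length) := by
    have heq : w.take i = (w.take i').take i := by rw [List.take_take, Nat.min_eq_left hle]
    rw [heq] at o1
    exact (occursAt_take_iff.1 o1).1
  have o2' : occursAt u (w.take i') (i' - u.length) := introduces_occursAt hi'
  have := occursAt_eq_of_occCount_one hi'.2.2.2 o1' o2'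
  omega

lemma exists_introduces {u w : List A} (hne : u ≠ []) (hf : u <:+: w) :
    ∃ i, Introduces w i u := by
  classical
  have hne' : (occFinset u w).Nonempty := by
    obtain ⟨k, hk⟩ := exists_occursAt hf
    exact ⟨k, mem_occFinset.2 hk⟩
  set j := (occFinset u w).min' hne' with hj
  have hjocc : occursAt u w j := mem_occFinset.1 (Finset.min'_mem _ _)
  have hjmin : ∀ k, occursAt u w k → j ≤ k := fun k hk => Finset.min'_le _ _ (mem_occFinset.2 hk)
  have hulen : 1 ≤ u.length := List.length_pos_iff.2 hne
  refine ⟨j + u.length, by omega, hjocc.1, ⟨w.take j, ?_⟩, ?_⟩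
  · rw [List.take_add, hjocc.2]
  · rw [occCount_eq_card]
    have hsing : occFinset u (w.take (j + u.length)) = {j} := by
      ext k
      simp only [mem_occFinset, Finset.mem_singleton]
      rw [occursAt_take_iff]
      constructor
      · rintro ⟨hk, hki⟩
        have := hjmin k hk
        omega
      · rintro rfl
        exact ⟨hjocc, le_refl _⟩
    rw [hsing, Finset.card_singleton]

noncomputable def introPos (w u : List A) : ℕ := sInf {i | Introduces w i u}

lemma introPos_eq {w u : List A} {i : ℕ} (h : Introduces w i u) : introPos w u = i := by
  have hset : {i' | Introduces w i' u} = {i} := by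
    ext i'
    simp only [Set.mem_setOf_eq, Set.mem_singleton_iff]
    exact ⟨fun h' => introduces_pos_unique h' h, fun h' => h' ▸ h⟩
  rw [introPos, hset, csInf_singleton]

lemma introduces_introPos {u w : List A} (hne : u ≠ []) (hf : u <:+: w) :
    Introduces w (introPos w u) u := by
  obtain ⟨i, hi⟩ := exists_introduces hne hf
  rw [introPos_eq hi]
  exact hi

lemma priv_isCRW {s : List A} (h : Privileged s) : IsCompleteReturnWord s := by
  cases h with
  | nil => exact Or.inl rfl
  | single a => exact Or.inr ⟨[], List.nil_prefix, List.nil_suffix, by rw [occCount_nil]; rfl⟩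
  | ret w u _ _ _ hret => exact Or.inr ⟨u, hret⟩

lemma exists_introduces_priv (w : List A) {i : ℕ} (h1 : 1 ≤ i) (h2 : i ≤ w.length) :
    ∃ s : List A, s ≠ [] ∧ Privileged s ∧ Introduces w i s := by
  have hp : w.take i ≠ [] := List.length_pos_iff.1 (by rw [List.length_take]; omega)
  obtain ⟨s, h3, h4, h5, h6⟩ := exists_priv_unioccurrent_suffix (w.take i) hp
  exact ⟨s, h3, h4, h1, h2, h5, h6⟩

lemma introduces_infix {w : List A} {i : ℕ} {u : List A} (h : Introduces w i u) : u <:+: w :=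
  h.2.2.1.isInfix.trans (List.take_prefix i w).isInfix

lemma part1 {w : List A} {i : ℕ} {u : List A} (hi : Introduces w i u)
    (huniq : ∀ v, Introduces w i v → IsCompleteReturnWord v → v = u) : Privileged u := by
  obtain ⟨s, h1, h2, h3⟩ := exists_introduces_priv w hi.1 hi.2.1
  have := huniq s h3 (priv_isCRW h2)
  exact this ▸ h2

end PrivAux

/-- If some position of `w` introduces exactly one complete return factor,
then that factor is privileged.  Moreover, `w` has exactly `|w| + 1` distinct complete
return factors if and only if every complete return factor of `w` is privileged. -/
theorem unique_introduced_return_is_privileged_and_count_iff {A : Type*} (w : List A) :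
    (∀ (i : ℕ) (u : List A), Introduces w i u → IsCompleteReturnWord u →
      (∀ v : List A, Introduces w i v → IsCompleteReturnWord v → v = u) →
      Privileged u) ∧
    (Set.ncard {u : List A | u <:+: w ∧ IsCompleteReturnWord u} = w.length + 1 ↔
      ∀ u : List A, u <:+: w → IsCompleteReturnWord u → Privileged u) := by
  classical
  open PrivAux in
  constructor
  · intro i u hi _ huniq
    exact part1 hi huniq
  · set FS : Finset (List A) := w.sublists.toFinset.filter
      (fun u => u <:+: w ∧ IsCompleteReturnWord u) with hFS
    have hmemFS : ∀ u : List A, u ∈ FS ↔ (u <:+: w ∧ IsCompleteReturnWord u) := by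
      intro u
      simp only [hFS, Finset.mem_filter, List.mem_toFinset, List.mem_sublists]
      exact ⟨fun h => h.2, fun h => ⟨h.1.sublist, h⟩⟩
    have hset : {u : List A | u <:+: w ∧ IsCompleteReturnWord u} = ↑FS := by
      ext u
      simp [hmemFS]
    have hnilFS : ([] : List A) ∈ FS := (hmemFS []).2 ⟨List.nil_infix, Or.inl rfl⟩
    set FS' := FS.erase ([] : List A) with hFS'
    have hcard : FS.card = FS'.card + 1 := by
      rw [hFS', Finset.card_erase_of_mem hnilFS]
      have : 1 ≤ FS.card := Finset.card_pos.2 ⟨[], hnilFS⟩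
      omega
    have hmemFS' : ∀ u : List A, u ∈ FS' ↔ (u ≠ [] ∧ u <:+: w ∧ IsCompleteReturnWord u) := by
      intro u
      rw [hFS', Finset.mem_erase, hmemFS]
    have himg : FS'.image (introPos w) = Finset.Icc 1 w.length := by
      ext i
      simp only [Finset.mem_image, Finset.mem_Icc]
      constructor
      · rintro ⟨u, hu, rfl⟩
        obtain ⟨h1, h2, h3⟩ := (hmemFS' u).1 hu
        have hint := introduces_introPos h1 h2
        exact ⟨hint.1, hint.2.1⟩
      · rintro ⟨h1, h2⟩
        obtain ⟨s, hs1, hs2, hs3⟩ := exists_introduces_priv w h1 h2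
        exact ⟨s, (hmemFS' s).2 ⟨hs1, introduces_infix hs3, priv_isCRW hs2⟩, introPos_eq hs3⟩
    have hIcc : (Finset.Icc 1 w.length).card = w.length := by
      rw [Nat.card_Icc]
      omega
    have hncard : Set.ncard {u : List A | u <:+: w ∧ IsCompleteReturnWord u} = FS.card := by
      rw [hset, Set.ncard_coe_finset]
    constructor
    · intro hcount u hinf hcrw
      have hc' : FS'.card = w.length := by
        rw [hncard] at hcount
        omega
      have hinj : Set.InjOn (introPos w) ↑FS' :=
        Finset.injOn_of_card_image_eq (by rw [himg, hIcc, hc'])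
      by_cases hu : u = []
      · exact hu ▸ Privileged.nil
      · obtain ⟨i, hi⟩ := exists_introduces hu hinf
        refine part1 hi ?_
        intro v hv hvcrw
        have hvFS' : v ∈ FS' := (hmemFS' v).2 ⟨introduces_ne_nil hv, introduces_infix hv, hvcrw⟩
        have huFS' : u ∈ FS' := (hmemFS' u).2 ⟨hu, hinf, hcrw⟩
        apply hinj hvFS' huFS'
        rw [introPos_eq hv, introPos_eq hi]
    · intro hpriv
      have hinj : Set.InjOn (introPos w) ↑FS' := by
        intro u hu v hv heq
        have hu' := (hmemFS' u).1 hu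
        have hv' := (hmemFS' v).1 hv
        have hiu := introduces_introPos hu'.1 hu'.2.1
        have hiv := introduces_introPos hv'.1 hv'.2.1
        rw [heq] at hiu
        exact priv_unioccurrent_unique (hpriv u hu'.2.1 hu'.2.2) (hpriv v hv'.2.1 hv'.2.2)
          hiu.2.2.1 hiv.2.2.1 hiu.2.2.2 hiv.2.2.2
      have hc' : FS'.card = w.length := by
        rw [← Finset.card_image_of_injOn hinj, himg, hIcc]
      rw [hncard]
      omega
end

section
/- Let Q be a Q-property and let w be a nonempty finite word in which at least two distinct letters occur. Then there exists an integer n with 2 ≤ n ≤ |w| such that w has no factor of length n having property Q, i.e. H^Q_n(w) = 0. -/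
lemma introducesMin {A : Type*} {w u : List A} (hu : u ≠ []) (hfac : u <:+: w) :
    Introduces w (sInf {i | u <:+ w.take i}) u := by
  classical
  obtain ⟨s, t, hst⟩ := hfac
  set P : Set ℕ := {i | u <:+ w.take i} with hP
  have htake : w.take (s.length + u.length) = s ++ u := by
    rw [← hst]
    have h1 : s.length + u.length = (s ++ u).length := by simp
    rw [h1, List.take_left]
  have hmem : s.length + u.length ∈ P := by
    simp only [hP, Set.mem_setOf_eq, htake]
    exact List.suffix_append s u
  have hPne : P.Nonempty := ⟨_, hmem⟩
  set i := sInf P with hidef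
  have hi : u <:+ w.take i := Nat.sInf_mem hPne
  have hmin : ∀ j ∈ P, i ≤ j := fun j hj => Nat.sInf_le hj
  have hwlen : w.length = s.length + u.length + t.length := by rw [← hst]; simp; omega
  have hilew : i ≤ w.length := le_trans (hmin _ hmem) (by omega)
  have hlentake : (w.take i).length = i := by
    have : (w.take i).length = min i w.length := by simp
    omega
  have hlenu : u.length ≤ i := by
    have := hi.length_le
    omega
  have h1 : 1 ≤ i := by
    rcases Nat.eq_zero_or_pos i with h0 | h
    · exfalso
      rw [h0, List.take_zero, List.suffix_nil] at hi
      exact hu hi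
    · exact h
  refine ⟨h1, hilew, hi, ?_⟩
  unfold occCount
  have hset : {j : ℕ | j + u.length ≤ (w.take i).length ∧
      ((w.take i).drop j).take u.length = u} = {i - u.length} := by
    ext j
    simp only [Set.mem_setOf_eq, Set.mem_singleton_iff, hlentake]
    constructor
    · rintro ⟨hj1, hj2⟩
      have e1 : (w.take i).drop j = (w.drop j).take (i - j) := List.drop_take ..
      have e2 : ((w.drop j).take (i - j)).take u.length = (w.drop j).take u.length := by
        rw [List.take_take]
        congr 1
        omega
      have e3 : (w.drop j).take u.length = u := by rw [← e2, ← e1, hj2]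
      have e4 : w.take (j + u.length) = w.take j ++ (w.drop j).take u.length := List.take_add ..
      have hocc : u <:+ w.take (j + u.length) := by
        rw [e4, e3]
        exact List.suffix_append _ _
      have := hmin _ hocc
      omega
    · rintro rfl
      refine ⟨by omega, ?_⟩
      obtain ⟨s', hs'⟩ := hi
      have hs'len : s'.length = i - u.length := by
        have := congrArg List.length hs'
        simp only [List.length_append, hlentake] at this
        omega
      rw [← hs', ← hs'len, List.drop_left, List.take_length]
  rw [hset, Set.ncard_singleton]

/-- If `Q` is a Q-property and `w` is a nonempty finite word containing at
least two distinct letters, then `H^Q_n(w) = 0` for some `n` with `2 ≤ n ≤ |w|`. -/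
theorem q_complexity_vanishes {A : Type*} (Q : List A → Prop) (hQ : IsQProperty Q)
    (w : List A) (hw : w ≠ []) (hab : ∃ a b : A, a ∈ w ∧ b ∈ w ∧ a ≠ b) :
    ∃ n : ℕ, 2 ≤ n ∧ n ≤ w.length ∧
      Set.ncard {u : List A | u <:+: w ∧ Q u ∧ u.length = n} = 0 := by
  classical
  obtain ⟨a, b, ha, hb, hne⟩ := hab
  by_contra hcon
  push_neg at hcon
  set T : Set (List A) := {u | u ≠ [] ∧ u <:+: w ∧ Q u} with hT
  have hTfin : T.Finite := by
    apply (w.sublists.finite_toSet).subset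
    rintro u ⟨-, hfac, -⟩
    simpa using hfac.sublist
  have hTcard : T.ncard ≤ w.length := by
    have hmaps : ∀ u ∈ T, sInf {i | u <:+ w.take i} ∈ Set.Icc 1 w.length := by
      rintro u ⟨hu, hfac, -⟩
      have h := introducesMin hu hfac
      exact ⟨h.1, h.2.1⟩
    have hinj : Set.InjOn (fun u => sInf {i | u <:+ w.take i}) T := by
      rintro u ⟨hu, hufac, hQu⟩ v ⟨hv, hvfac, hQv⟩ hfe
      have h1 := introducesMin hu hufac
      have h2 := introducesMin hv hvfac
      simp only at hfe
      rw [hfe] at h1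
      exact hQ.introduces_at_most_one w _ u v h1 h2 hQu hQv
    have := Set.ncard_le_ncard_of_injOn _ hmaps hinj (Set.finite_Icc 1 w.length)
    have hIcc : (Set.Icc 1 w.length).ncard = w.length := by
      rw [Set.ncard_eq_toFinset_card']
      simp [Nat.card_Icc]
    omega
  have hS : ∀ n, 2 ≤ n → n ≤ w.length →
      {u : List A | u <:+: w ∧ Q u ∧ u.length = n}.Nonempty :=
    fun n h2 hle => Set.nonempty_of_ncard_ne_zero (hcon n h2 hle)
  set g : ℕ → List A := fun n =>
    if n = 0 then [a] else if n = 1 then [b]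
    else if h : 2 ≤ n ∧ n ≤ w.length then (hS n h.1 h.2).choose else [] with hg
  have hg0 : g 0 = [a] := rfl
  have hg1 : g 1 = [b] := rfl
  have hg2 : ∀ n, 2 ≤ n → n ≤ w.length →
      g n ∈ {u : List A | u <:+: w ∧ Q u ∧ u.length = n} := by
    intro n h2 hle
    have : g n = (hS n h2 hle).choose := by
      simp only [hg]
      rw [if_neg (by omega), if_neg (by omega), dif_pos ⟨h2, hle⟩]
    rw [this]
    exact (hS n h2 hle).choose_spec
  have hsingle : ∀ c : A, c ∈ w → [c] ∈ T := by
    intro c hc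
    obtain ⟨s, t, hst⟩ := List.append_of_mem hc
    exact ⟨by simp, ⟨s, t, by rw [hst]; simp⟩, hQ.q_single c⟩
  have hmaps : ∀ n ∈ Set.Icc 0 w.length, g n ∈ T := by
    intro n hn
    simp only [Set.mem_Icc] at hn
    rcases Nat.lt_or_ge n 2 with h | h
    · interval_cases n
      · exact hsingle a ha
      · exact hsingle b hb
    · obtain ⟨hfac, hQu, hlen⟩ := hg2 n h hn.2
      exact ⟨by intro h0; rw [h0] at hlen; simp at hlen; omega, hfac, hQu⟩
  have hglen : ∀ n ∈ Set.Icc 0 w.length, (g n).length = max 1 n := by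
    intro n hn
    simp only [Set.mem_Icc] at hn
    rcases Nat.lt_or_ge n 2 with h | h
    · interval_cases n
      · simp [hg0]
      · simp [hg1]
    · rw [(hg2 n h hn.2).2.2]
      omega
  have hinj : Set.InjOn g (Set.Icc 0 w.length) := by
    intro m hm n hn he
    have e := congrArg List.length he
    rw [hglen m hm, hglen n hn] at e
    by_contra hmn
    simp only [Set.mem_Icc] at hm hn
    obtain ⟨hm1, hn1⟩ : m ≤ 1 ∧ n ≤ 1 := by omega
    interval_cases m <;> interval_cases n
    · exact hmn rfl
    · rw [hg0, hg1] at he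
      simp at he
      exact hne he
    · rw [hg0, hg1] at he
      simp at he
      exact hne he.symm
    · exact hmn rfl
  have hcount : (Set.Icc 0 w.length).ncard ≤ T.ncard :=
    Set.ncard_le_ncard_of_injOn g hmaps hinj hTfin
  have hIcc : (Set.Icc 0 w.length).ncard = w.length + 1 := by
    rw [Set.ncard_eq_toFinset_card']
    simp [Nat.card_Icc]
  omega
end

section
/- Let Q be a Q-property and let w = y^ω be a periodic infinite word, where y is a nonempty finite word. Then either H^Q_n(w) = 0 for infinitely many n, or there exists k such that H^Q_n(w) = 1 for all n ≥ k. -/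
/-- The prefix of length `e` of an infinite word. -/
def prefWord {A : Type*} (w : ℕ → A) (e : ℕ) : List A := (List.range e).map w

lemma prefWord_length {A : Type*} (w : ℕ → A) (e : ℕ) : (prefWord w e).length = e := by
  simp [prefWord]

lemma prefWord_drop_take {A : Type*} (w : ℕ → A) {i L e : ℕ} (h : i + L ≤ e) :
    ((prefWord w e).drop i).take L = (List.range L).map (fun k => w (i + k)) := by
  apply List.ext_getElem
  · simp [prefWord]; omega
  · intro k h1 h2
    simp only [List.getElem_take, List.getElem_drop, prefWord, List.getElem_map,
      List.getElem_range]

lemma prefWord_suffix {A : Type*} (w : ℕ → A) (f L : ℕ) :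
    ((List.range L).map fun k => w (f + k)) <:+ prefWord w (f + L) := by
  refine ⟨prefWord w f, ?_⟩
  simp [prefWord, List.range_add, Function.comp]

lemma occCount_prefWord {A : Type*} (w : ℕ → A) (u : List A) (e : ℕ) :
    occCount u (prefWord w e) =
      Set.ncard {i : ℕ | i + u.length ≤ e ∧ u = (List.range u.length).map fun k => w (i + k)} := by
  unfold occCount
  congr 1
  ext i
  simp only [Set.mem_setOf_eq, prefWord_length]
  constructor
  · rintro ⟨h1, h2⟩
    refine ⟨h1, ?_⟩
    rw [prefWord_drop_take w h1] at h2
    exact h2.symm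
  · rintro ⟨h1, h2⟩
    refine ⟨h1, ?_⟩
    rw [prefWord_drop_take w h1]
    exact h2.symm

/-- For a Q-property `Q` and a periodic infinite word `w = y^ω` (over a
finite alphabet), either `H^Q_n(w) = 0` for infinitely many `n`, or there exists `k`
such that `H^Q_n(w) = 1` for all `n ≥ k`. -/
theorem q_complexity_of_periodic {A : Type*} [Fintype A] (Q : List A → Prop)
    (hQ : IsQProperty Q) (y : List A) (hy : y ≠ []) (w : ℕ → A)
    (hw : ∀ n : ℕ, w n = y.getD (n % y.length) (w 0)) :
    (∀ N : ℕ, ∃ n : ℕ, N ≤ n ∧ qComplexityInf w Q n = 0) ∨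
    (∃ k : ℕ, ∀ n : ℕ, k ≤ n → qComplexityInf w Q n = 1) := by
  rw [or_iff_not_imp_left]
  intro hcontra
  push_neg at hcontra
  obtain ⟨N0, hN0⟩ := hcontra
  classical
  set p := y.length with hpdef
  have hp : 0 < p := List.length_pos_iff.mpr hy
  have hper : ∀ i k : ℕ, w (i % p + k) = w (i + k) := by
    intro i k
    rw [hw (i % p + k), hw (i + k), Nat.mod_add_mod]
  -- the first-occurrence position of a factor is `< p`
  have hfind_lt : ∀ (u : List A)
      (h : ∃ i : ℕ, u = (List.range u.length).map fun k => w (i + k)),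
      Nat.find h < p := by
    intro u h
    have h' := h
    obtain ⟨j, hj⟩ := h'
    have hocc : u = (List.range u.length).map fun k => w (j % p + k) := by
      conv_lhs => rw [hj]
      exact List.map_congr_left fun a _ => (hper j a).symm
    exact lt_of_le_of_lt (Nat.find_min' h hocc) (Nat.mod_lt j hp)
  -- key injectivity: two nonempty Q-factors whose first occurrences end at the
  -- same position are equal
  have key : ∀ u v : List A, Q u → Q v → u ≠ [] → v ≠ [] →
      ∀ (hu : ∃ i : ℕ, u = (List.range u.length).map fun k => w (i + k))
        (hv : ∃ i : ℕ, v = (List.range v.length).map fun k => w (i + k)),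
      Nat.find hu + u.length = Nat.find hv + v.length → u = v := by
    intro u v hQu hQv hu0 hv0 hu hv he
    set e := Nat.find hu + u.length with hedef
    have intro_of : ∀ (x : List A)
        (hx : ∃ i : ℕ, x = (List.range x.length).map fun k => w (i + k)), x ≠ [] →
        Nat.find hx + x.length = e → Introduces (prefWord w e) e x := by
      intro x hx hx0 hxe
      have hxlen : 0 < x.length := List.length_pos_iff.mpr hx0
      have htake : (prefWord w e).take e = prefWord w e :=
        List.take_of_length_le (le_of_eq (prefWord_length w e))
      refine ⟨by omega, le_of_eq (prefWord_length w e).symm, ?_, ?_⟩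
      · rw [htake]
        have h := prefWord_suffix w (Nat.find hx) x.length
        rw [hxe] at h
        rwa [← Nat.find_spec hx] at h
      · rw [htake, occCount_prefWord]
        have hset : {i : ℕ | i + x.length ≤ e ∧
            x = (List.range x.length).map fun k => w (i + k)} = {Nat.find hx} := by
          ext i
          simp only [Set.mem_setOf_eq, Set.mem_singleton_iff]
          constructor
          · rintro ⟨h1, h2⟩
            have h3 := Nat.find_min' hx h2
            omega
          · rintro rfl
            exact ⟨le_of_eq hxe, Nat.find_spec hx⟩
        rw [hset, Set.ncard_singleton]
    exact hQ.introduces_at_most_one (prefWord w e) e u v (intro_of u hu hu0 rfl)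
      (intro_of v hv hv0 he.symm) hQu hQv
  -- the finsets of Q-factors of each length
  have hfin : ∀ n : ℕ, {u : List A | IsFactorInf w u ∧ Q u ∧ u.length = n}.Finite := by
    intro n
    exact Set.Finite.subset (List.finite_length_eq A n) fun u hu => hu.2.2
  set F : ℕ → Finset (List A) := fun n => (hfin n).toFinset with hF
  have hcard : ∀ n, qComplexityInf w Q n = (F n).card := fun n =>
    Set.ncard_eq_toFinset_card _ (hfin n)
  have hmemF : ∀ n (u : List A), u ∈ F n ↔ IsFactorInf w u ∧ Q u ∧ u.length = n := by
    intro n u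
    rw [hF, Set.Finite.mem_toFinset]
    rfl
  set N : ℕ := max N0 1 with hNdef
  have hN1 : 1 ≤ N := le_max_right _ _
  have hone : ∀ n, N ≤ n → 1 ≤ (F n).card := by
    intro n hn
    have h := hN0 n (le_trans (le_max_left _ _) hn)
    rw [hcard n] at h
    omega
  -- the end-position function
  set E : List A → ℕ := fun u =>
    (if h : ∃ i : ℕ, u = (List.range u.length).map fun k => w (i + k) then Nat.find h else 0)
      + u.length with hE
  have hEval : ∀ (u : List A)
      (h : ∃ i : ℕ, u = (List.range u.length).map fun k => w (i + k)),
      E u = Nat.find h + u.length := by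
    intro u h
    rw [hE]
    simp only
    rw [dif_pos h]
  -- the counting bound
  have hsum : ∀ M, N ≤ M → ∑ n ∈ Finset.Icc N M, (F n).card ≤ M + p - N := by
    intro M hM
    have hdisj : ∀ a ∈ Finset.Icc N M, ∀ b ∈ Finset.Icc N M, a ≠ b →
        Disjoint (F a) (F b) := by
      intro a _ b _ hab
      rw [Finset.disjoint_left]
      intro u hua hub
      rw [hmemF] at hua hub
      exact hab (hua.2.2 ▸ hub.2.2 ▸ rfl)
    rw [← Finset.card_biUnion hdisj]
    have hmaps : ∀ u ∈ (Finset.Icc N M).biUnion F, E u ∈ Finset.Icc N (M + p - 1) := by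
      intro u hu
      rw [Finset.mem_biUnion] at hu
      obtain ⟨n, hn, hu⟩ := hu
      rw [Finset.mem_Icc] at hn
      rw [hmemF] at hu
      obtain ⟨hfac, hq, hlen⟩ := hu
      have hex : ∃ i : ℕ, u = (List.range u.length).map fun k => w (i + k) := hfac
      rw [Finset.mem_Icc, hEval u hex]
      have hlt := hfind_lt u hex
      omega
    have hinj : Set.InjOn E ↑((Finset.Icc N M).biUnion F) := by
      intro u hu v hv he
      rw [Finset.mem_coe, Finset.mem_biUnion] at hu hv
      obtain ⟨a, ha, hu⟩ := hu
      obtain ⟨b, hb, hv⟩ := hv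
      rw [Finset.mem_Icc] at ha hb
      rw [hmemF] at hu hv
      obtain ⟨hfacu, hqu, hlenu⟩ := hu
      obtain ⟨hfacv, hqv, hlenv⟩ := hv
      have hexu : ∃ i : ℕ, u = (List.range u.length).map fun k => w (i + k) := hfacu
      have hexv : ∃ i : ℕ, v = (List.range v.length).map fun k => w (i + k) := hfacv
      have hu0 : u ≠ [] := by
        intro h
        rw [h] at hlenu
        simp at hlenu
        omega
      have hv0 : v ≠ [] := by
        intro h
        rw [h] at hlenv
        simp at hlenv
        omega
      rw [hEval u hexu, hEval v hexv] at he
      exact key u v hqu hqv hu0 hv0 hexu hexv he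
    calc ((Finset.Icc N M).biUnion F).card ≤ (Finset.Icc N (M + p - 1)).card :=
        Finset.card_le_card_of_injOn E hmaps hinj
      _ = M + p - 1 + 1 - N := Nat.card_Icc _ _
      _ ≤ M + p - N := by omega
  -- hence at most `p - 1` lengths in `[N, M]` with two or more Q-factors
  have hfilter : ∀ M, N ≤ M →
      ((Finset.Icc N M).filter fun n => 2 ≤ (F n).card).card ≤ p - 1 := by
    intro M hM
    set s1 := (Finset.Icc N M).filter fun n => 2 ≤ (F n).card with hs1
    set s2 := (Finset.Icc N M).filter fun n => ¬ 2 ≤ (F n).card with hs2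
    have hsplit : ∑ n ∈ s1, (F n).card + ∑ n ∈ s2, (F n).card
        = ∑ n ∈ Finset.Icc N M, (F n).card :=
      Finset.sum_filter_add_sum_filter_not _ _ _
    have hb1 : s1.card • 2 ≤ ∑ n ∈ s1, (F n).card :=
      Finset.card_nsmul_le_sum s1 _ 2 fun n hn => (Finset.mem_filter.mp hn).2
    have hb2 : s2.card • 1 ≤ ∑ n ∈ s2, (F n).card :=
      Finset.card_nsmul_le_sum s2 _ 1 fun n hn =>
        hone n (Finset.mem_Icc.mp (Finset.mem_filter.mp hn).1).1
    have hcards : s1.card + s2.card = (Finset.Icc N M).card :=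
      Finset.card_filter_add_card_filter_not _
    have hIcc : (Finset.Icc N M).card = M + 1 - N := Nat.card_Icc _ _
    have htot := hsum M hM
    simp only [smul_eq_mul] at hb1 hb2
    omega
  -- the set of lengths with two or more Q-factors is finite
  have hTfin : {n : ℕ | N ≤ n ∧ 2 ≤ (F n).card}.Finite := by
    by_contra hinf
    obtain ⟨t, hts, htfin, htcard⟩ := Set.Infinite.exists_subset_ncard_eq hinf p
    have htf : htfin.toFinset.card = p := by
      rw [← Set.ncard_eq_toFinset_card _ htfin]
      exact htcard
    have hne : htfin.toFinset.Nonempty := by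
      rw [← Finset.card_pos, htf]
      exact hp
    set M := htfin.toFinset.max' hne with hMdef
    have hMmem := hts (htfin.mem_toFinset.mp (htfin.toFinset.max'_mem hne))
    have hMN : N ≤ M := hMmem.1
    have hsub : htfin.toFinset ⊆ (Finset.Icc N M).filter fun n => 2 ≤ (F n).card := by
      intro n hn
      have h := hts (htfin.mem_toFinset.mp hn)
      rw [Finset.mem_filter, Finset.mem_Icc]
      exact ⟨⟨h.1, Finset.le_max' _ _ hn⟩, h.2⟩
    have h1 := Finset.card_le_card hsub
    rw [htf] at h1
    have h2 := hfilter M hMN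
    omega
  obtain ⟨k0, hk0⟩ := hTfin.bddAbove
  refine ⟨max (k0 + 1) N, fun n hn => ?_⟩
  have hnN : N ≤ n := le_trans (le_max_right _ _) hn
  have hnk0 : k0 + 1 ≤ n := le_trans (le_max_left _ _) hn
  have h1 : 1 ≤ (F n).card := hone n hnN
  have h2 : ¬ 2 ≤ (F n).card := by
    intro hc
    have hmem : n ∈ {n : ℕ | N ≤ n ∧ 2 ≤ (F n).card} := ⟨hnN, hc⟩
    have := hk0 hmem
    omega
  rw [hcard n]
  omega
end

section
/- Let Q be a Q-property and let w be an ultimately periodic infinite word. Then either H^Q_n(w) = 0 for infinitely many n, or there exists k such that H^Q_n(w) = 1 for all n ≥ k. -/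
private lemma window_isInfix {A : Type*} (w : ℕ → A) {m j ℓ : ℕ} (h : j + ℓ ≤ m) :
    (List.range ℓ).map (fun k => w (j + k)) <:+: (List.range m).map w := by
  have heq : (List.range ℓ).map (fun k => w (j + k)) =
      (((List.range m).map w).drop j).take ℓ := by
    apply List.ext_getElem
    · simp; omega
    · intro i h1 h2
      simp only [List.getElem_map, List.getElem_range, List.getElem_take, List.getElem_drop]
  rw [heq]
  exact ((List.take_prefix _ _).isInfix).trans ((List.drop_suffix _ _).isInfix)

private lemma exists_introduces {A : Type*} {P f : List A} (hne : f ≠ []) (hinf : f <:+: P) :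
    ∃ i, Introduces P i f := by
  classical
  have hex : ∃ i, i ≤ P.length ∧ f <:+ P.take i := by
    obtain ⟨s, t, rfl⟩ := hinf
    refine ⟨s.length + f.length, by simp, ?_⟩
    rw [show s ++ f ++ t = (s ++ f) ++ t by simp, show s.length + f.length = (s ++ f).length by simp,
      List.take_left]
    exact List.suffix_append s f
  set i := Nat.find hex with hidef
  obtain ⟨hgood, hsuf⟩ := Nat.find_spec hex
  have hflen : 0 < f.length := List.length_pos_iff.mpr hne
  have hfle : f.length ≤ i := hsuf.length_le.trans (List.length_take_le i P)
  have htakelen : (P.take i).length = i := by rw [List.length_take]; omega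
  refine ⟨i, ?_⟩
  unfold Introduces
  refine ⟨by omega, hgood, hsuf, ?_⟩
  have hset : {j : ℕ | j + f.length ≤ (P.take i).length ∧ ((P.take i).drop j).take f.length = f}
      = {i - f.length} := by
    ext j
    simp only [Set.mem_setOf_eq, Set.mem_singleton_iff, htakelen]
    constructor
    · rintro ⟨hj1, hj2⟩
      have hsuf2 : f <:+ P.take (j + f.length) := by
        have h1 : P.take (j + f.length) = (P.take i).take (j + f.length) := by
          rw [List.take_take, min_eq_left hj1]
        have h2 : ((P.take i).take (j + f.length)).drop j = f := by
          rw [List.drop_take]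
          simpa using hj2
        have h3 := List.drop_suffix j ((P.take i).take (j + f.length))
        rw [h2] at h3
        rw [h1]
        exact h3
      have := Nat.find_min' hex ⟨by omega, hsuf2⟩
      omega
    · rintro rfl
      obtain ⟨s, hs⟩ := hsuf
      have hslen : s.length = i - f.length := by
        have := congrArg List.length hs
        simp at this; omega
      constructor
      · omega
      · rw [← hs, ← hslen, List.drop_left, List.take_length]
  unfold occCount
  rw [hset]
  exact Set.ncard_singleton _

private lemma ncard_qfactors_le {A : Type*} {Q : List A → Prop} (hQ : IsQProperty Q)
    (P : List A) : {f : List A | f ≠ [] ∧ f <:+: P ∧ Q f}.ncard ≤ P.length := by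
  classical
  have key : ∀ f ∈ {f : List A | f ≠ [] ∧ f <:+: P ∧ Q f}, ∃ i, Introduces P i f :=
    fun f hf => exists_introduces hf.1 hf.2.1
  choose! φ hφ using key
  have h1 : {f : List A | f ≠ [] ∧ f <:+: P ∧ Q f}.ncard ≤ (Set.Icc 1 P.length).ncard := by
    apply Set.ncard_le_ncard_of_injOn φ
    · intro f hf
      obtain ⟨h1, h2, _, _⟩ := hφ f hf
      exact ⟨h1, h2⟩
    · intro f hf g hg heq
      exact hQ.introduces_at_most_one P (φ f) f g (hφ f hf) (heq ▸ hφ g hg)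
        hf.2.2 hg.2.2
  calc _ ≤ (Set.Icc 1 P.length).ncard := h1
    _ = P.length := by
        rw [← Finset.coe_Icc, Set.ncard_coe_finset, Nat.card_Icc]; omega

private lemma shift_down {A : Type*} {w : ℕ → A} {L p : ℕ} (hp : 0 < p)
    (hper : ∀ n, L ≤ n → w (n + p) = w n) (i ℓ : ℕ) :
    ∃ j, j < L + p ∧ ∀ k, k < ℓ → w (j + k) = w (i + k) := by
  induction i using Nat.strong_induction_on with
  | _ i ih =>
    by_cases h : i < L + p
    · exact ⟨i, h, fun k _ => rfl⟩
    · obtain ⟨j, hj, hjk⟩ := ih (i - p) (by omega)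
      refine ⟨j, hj, fun k hk => ?_⟩
      rw [hjk k hk]
      have h2 := hper (i - p + k) (by omega)
      rw [show i - p + k + p = i + k by omega] at h2
      exact h2.symm


/-- For a Q-property `Q` and an ultimately periodic infinite word `w`
(over a finite alphabet), either `H^Q_n(w) = 0` for infinitely many `n`, or there
exists `k` such that `H^Q_n(w) = 1` for all `n ≥ k`. -/
theorem q_complexity_of_ultimately_periodic {A : Type*} [Fintype A] (Q : List A → Prop)
    (hQ : IsQProperty Q) (w : ℕ → A) (hw : UltimatelyPeriodic w) :
    (∀ N : ℕ, ∃ n : ℕ, N ≤ n ∧ qComplexityInf w Q n = 0) ∨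
    (∃ k : ℕ, ∀ n : ℕ, k ≤ n → qComplexityInf w Q n = 1) := by
  classical
  by_cases h0 : ∀ N : ℕ, ∃ n : ℕ, N ≤ n ∧ qComplexityInf w Q n = 0
  · exact Or.inl h0
  right
  push_neg at h0
  obtain ⟨N0, hN0⟩ := h0
  set N := max N0 1 with hNdef
  have hN1 : 1 ≤ N := le_max_right _ _
  have hpos : ∀ n, N ≤ n → 1 ≤ qComplexityInf w Q n := by
    intro n hn
    have := hN0 n (le_trans (le_max_left _ _) hn)
    omega
  obtain ⟨u, v, hv, hval⟩ := hw
  have hp : 0 < v.length := List.length_pos_iff.mpr hv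
  have hper : ∀ n, u.length ≤ n → w (n + v.length) = w n := by
    intro n hn
    rw [hval (n + v.length), hval n, if_neg (by omega), if_neg (by omega),
      show n + v.length - u.length = (n - u.length) + v.length from by omega,
      Nat.add_mod_right]
  set C := u.length + v.length with hCdef
  have hC : 1 ≤ C := by omega
  -- key cardinality bound
  have key : ∀ n, N ≤ n →
      ((Finset.Icc N n).filter (fun ℓ => 2 ≤ qComplexityInf w Q ℓ)).card + (n + 1 - N)
        ≤ n + C := by
    intro n hn
    set P := (List.range (n + C)).map w with hPdef
    have hPlen : P.length = n + C := by simp [hPdef]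
    have hSfin : {f : List A | f ≠ [] ∧ f <:+: P ∧ Q f}.Finite := by
      apply Set.Finite.subset (List.finite_toSet P.sublists)
      intro f hf
      simpa [List.mem_sublists] using hf.2.1.sublist
    set 𝒬 := hSfin.toFinset with h𝒬def
    have h𝒬card : 𝒬.card ≤ n + C := by
      have h1 := ncard_qfactors_le hQ P
      rw [hPlen, Set.ncard_eq_toFinset_card _ hSfin] at h1
      exact h1
    have hfib : ∀ ℓ ∈ Finset.Icc N n,
        qComplexityInf w Q ℓ ≤ ((𝒬.filter (fun f => f.length = ℓ))).card := by
      intro ℓ hℓ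
      simp only [Finset.mem_Icc] at hℓ
      rw [qComplexityInf, ← Set.ncard_coe_finset]
      apply Set.ncard_le_ncard _ (Finset.finite_toSet _)
      rintro f ⟨⟨i, hi⟩, hQf, hlen⟩
      obtain ⟨j, hj, hjk⟩ := shift_down hp hper i f.length
      have hfw : f = (List.range f.length).map (fun k => w (j + k)) := by
        conv_lhs => rw [hi]
        exact List.map_congr_left fun a ha => (hjk a (by simpa using ha)).symm
      refine Finset.mem_coe.mpr (Finset.mem_filter.mpr
        ⟨(Set.Finite.mem_toFinset _).mpr ⟨?_, ?_, hQf⟩, hlen⟩)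
      · intro hfnil
        rw [hfnil] at hlen
        simp at hlen
        omega
      · rw [hfw, hPdef]
        exact window_isInfix w (by omega)
    have hdisj : ∀ x ∈ Finset.Icc N n, ∀ y ∈ Finset.Icc N n, x ≠ y →
        Disjoint (𝒬.filter (fun f => f.length = x)) (𝒬.filter (fun f => f.length = y)) := by
      intro x _ y _ hxy
      rw [Finset.disjoint_left]
      intro f hfx hfy
      simp only [Finset.mem_filter] at hfx hfy
      exact hxy (hfx.2 ▸ hfy.2 ▸ rfl)
    have hsum : ∑ ℓ ∈ Finset.Icc N n, ((𝒬.filter (fun f => f.length = ℓ))).card ≤ 𝒬.card := by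
      rw [← Finset.card_biUnion hdisj]
      exact Finset.card_le_card (Finset.biUnion_subset.mpr fun ℓ _ => Finset.filter_subset _ _)
    have h1 : ∑ ℓ ∈ Finset.Icc N n, qComplexityInf w Q ℓ ≤ n + C :=
      le_trans (Finset.sum_le_sum hfib) (le_trans hsum h𝒬card)
    set T := (Finset.Icc N n).filter (fun ℓ => 2 ≤ qComplexityInf w Q ℓ) with hTdef
    set T' := (Finset.Icc N n).filter (fun ℓ => ¬ 2 ≤ qComplexityInf w Q ℓ) with hT'def
    have hTcards : T.card + T'.card = (Finset.Icc N n).card :=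
      Finset.card_filter_add_card_filter_not _
    have hlow1 : T.card • 2 ≤ ∑ ℓ ∈ T, qComplexityInf w Q ℓ :=
      Finset.card_nsmul_le_sum _ _ _ (fun x hx => (Finset.mem_filter.mp hx).2)
    have hlow2 : T'.card • 1 ≤ ∑ ℓ ∈ T', qComplexityInf w Q ℓ :=
      Finset.card_nsmul_le_sum _ _ _
        (fun x hx => hpos x (Finset.mem_Icc.mp (Finset.mem_filter.mp hx).1).1)
    have hsplit : ∑ ℓ ∈ T, qComplexityInf w Q ℓ + ∑ ℓ ∈ T', qComplexityInf w Q ℓ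
        = ∑ ℓ ∈ Finset.Icc N n, qComplexityInf w Q ℓ :=
      Finset.sum_filter_add_sum_filter_not _ _ _
    have hIcc : (Finset.Icc N n).card = n + 1 - N := Nat.card_Icc _ _
    simp only [smul_eq_mul] at hlow1 hlow2
    omega
  -- finitely many bad lengths
  have hfinT : {ℓ : ℕ | N ≤ ℓ ∧ 2 ≤ qComplexityInf w Q ℓ}.Finite := by
    by_contra hinf
    obtain ⟨t, hts, htc⟩ := Set.Infinite.exists_subset_card_eq hinf (C + N + 1)
    have htne : t.Nonempty := Finset.card_pos.mp (by omega)
    set n := t.max' htne with hndef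
    have hnmem := hts (t.max'_mem htne)
    have hn : N ≤ n := hnmem.1
    have hsub : t ⊆ (Finset.Icc N n).filter (fun ℓ => 2 ≤ qComplexityInf w Q ℓ) := by
      intro ℓ hℓ
      have hℓ2 := hts hℓ
      exact Finset.mem_filter.mpr ⟨Finset.mem_Icc.mpr ⟨hℓ2.1, Finset.le_max' t ℓ hℓ⟩, hℓ2.2⟩
    have hcard := Finset.card_le_card hsub
    have hk := key n hn
    omega
  obtain ⟨k0, hk0⟩ := hfinT.bddAbove
  refine ⟨max N (k0 + 1), fun n hn => ?_⟩
  have h1 : 1 ≤ qComplexityInf w Q n := hpos n (le_trans (le_max_left _ _) hn)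
  have h2 : ¬ 2 ≤ qComplexityInf w Q n := by
    intro h
    have hmem : n ∈ {ℓ : ℕ | N ≤ ℓ ∧ 2 ≤ qComplexityInf w Q ℓ} :=
      ⟨le_trans (le_max_left _ _) hn, h⟩
    have := hk0 hmem
    omega
  omega
end
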